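/- arXiv:1907.12229 — 3 statements merged into one kernel-verified Lean document; each statement's English description precedes it below -/
import Mathlib

section
/- Let n ≥ 2 and let L be an n×n real matrix that is essentially nonnegative (all off-diagonal entries nonnegative), irreducible, and has all column sums equal to zero. Let β_i > 0 and γ_i > 0 for i = 1,…,n with β_i/γ_i ≠ β_j/γ_j for some i ≠ j, set F = diag(β_1,…,β_n), D = diag(γ_1,…,γ_n), V(d) = D − d·L, R0(d) = ρ(F·V(d)⁻¹), and let w_i = (−1)^{n−1}·C_{ii} > 0 where C_{ii} are the diagonal cofactors of L. Suppose Σ_{i=1}^n β_i·w_i ≥ Σ_{i=1}^n γ_i·w_i (high-risk domain). Then R0(d) > 1 for all d ≥ 0. -/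
open Matrix Filter Set Topology

/-- A square matrix is irreducible if it is not permutation-similar to a nontrivial block
upper triangular matrix; equivalently, for every nonempty proper subset `S` of indices there
are `i ∈ S` and `j ∉ S` with `A i j ≠ 0`. -/
def IsIrreducibleMatrix {n : ℕ} (A : Matrix (Fin n) (Fin n) ℝ) : Prop :=
  ∀ S : Set (Fin n), S.Nonempty → S ≠ Set.univ → ∃ i ∈ S, ∃ j ∈ Sᶜ, A i j ≠ 0

/-- The spectral bound of a real square matrix: the maximum of the real parts of its
(complex) eigenvalues, i.e. of the roots of its characteristic polynomial over `ℂ`. -/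
noncomputable def spectralBound {n : ℕ} (A : Matrix (Fin n) (Fin n) ℝ) : ℝ :=
  sSup {x : ℝ | ∃ μ : ℂ, ((A.map Complex.ofReal).charpoly).IsRoot μ ∧ μ.re = x}

/-- The spectral radius of a real square matrix: the maximum modulus of its (complex)
eigenvalues, i.e. of the roots of its characteristic polynomial over `ℂ`. -/
noncomputable def specRad {n : ℕ} (A : Matrix (Fin n) (Fin n) ℝ) : ℝ :=
  sSup {x : ℝ | ∃ μ : ℂ, ((A.map Complex.ofReal).charpoly).IsRoot μ ∧ ‖μ‖ = x}

/-- The `(i,j)` cofactor of a square matrix: `(-1)^(i+j)` times the determinant of the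
matrix obtained by deleting row `i` and column `j`. -/
noncomputable def cofactor {n : ℕ} (A : Matrix (Fin (n+1)) (Fin (n+1)) ℝ) (i j : Fin (n+1)) : ℝ :=
  (-1 : ℝ) ^ ((i : ℕ) + (j : ℕ)) * (A.submatrix i.succAbove j.succAbove).det

namespace R0Aux

variable {m : ℕ}





lemma pow_entry_nonneg {P : Matrix (Fin m) (Fin m) ℝ} (hP : ∀ i j, 0 ≤ P i j) :
    ∀ k i j, 0 ≤ (P ^ k) i j := by
  intro k
  induction k with
  | zero =>
    intro i j
    by_cases h : i = j <;> simp [pow_zero, Matrix.one_apply, h]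
  | succ k ih =>
    intro i j
    rw [pow_succ, Matrix.mul_apply]
    exact Finset.sum_nonneg fun l _ => mul_nonneg (ih i l) (hP l j)

lemma pow_diag_pos {P : Matrix (Fin m) (Fin m) ℝ} (hP : ∀ i j, 0 ≤ P i j)
    (hd : ∀ i, 0 < P i i) : ∀ k i, 0 < (P ^ k) i i := by
  intro k
  induction k with
  | zero => intro i; simp [pow_zero, Matrix.one_apply]
  | succ k ih =>
    intro i
    rw [pow_succ, Matrix.mul_apply]
    have h1 : 0 < (P ^ k) i i * P i i := mul_pos (ih i) (hd i)
    refine lt_of_lt_of_le h1 (Finset.single_le_sum (f := fun q => (P ^ k) i q * P q i)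
      (fun l _ => mul_nonneg (pow_entry_nonneg hP k i l) (hP l i)) (Finset.mem_univ i))

lemma pow_pos_of_cut {P : Matrix (Fin m) (Fin m) ℝ}
    (hP : ∀ i j, 0 ≤ P i j) (hd : ∀ i, 0 < P i i)
    (hcut : ∀ S : Set (Fin m), S.Nonempty → S ≠ Set.univ → ∃ i ∈ S, ∃ j ∈ Sᶜ, P i j ≠ 0) :
    ∀ i j, 0 < (P ^ (m - 1)) i j := by
  classical
  intro i j
  have hm : 0 < m := i.pos
  set S : ℕ → Finset (Fin m) := fun k => Finset.univ.filter (fun l => 0 < (P ^ k) i l) with hS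
  have hmemS : ∀ k l, l ∈ S k ↔ 0 < (P ^ k) i l := by
    intro k l; simp [hS]
  have hiS : ∀ k, i ∈ S k := by
    intro k; rw [hmemS]; exact pow_diag_pos hP hd k i
  have hmono : ∀ k, S k ⊆ S (k + 1) := by
    intro k l hl
    rw [hmemS] at hl ⊢
    rw [pow_succ, Matrix.mul_apply]
    have h1 : 0 < (P ^ k) i l * P l l := mul_pos hl (hd l)
    refine lt_of_lt_of_le h1 (Finset.single_le_sum (f := fun q => (P ^ k) i q * P q l)
      (fun q _ => mul_nonneg (pow_entry_nonneg hP k i q) (hP q l)) (Finset.mem_univ l))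
  have hgrow : ∀ k, S k ≠ Finset.univ → ∃ l, l ∉ S k ∧ l ∈ S (k + 1) := by
    intro k hne
    have hSne : (↑(S k) : Set (Fin m)).Nonempty := ⟨i, by simpa using hiS k⟩
    have hSneu : (↑(S k) : Set (Fin m)) ≠ Set.univ := by
      intro h
      apply hne
      apply Finset.coe_injective
      simpa using h
    obtain ⟨a, ha, b, hb, hab⟩ := hcut _ hSne hSneu
    have haS : a ∈ S k := ha
    have hbS : b ∉ S k := hb
    refine ⟨b, hbS, ?_⟩
    rw [hmemS]
    rw [pow_succ, Matrix.mul_apply]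
    have hPab : 0 < P a b := lt_of_le_of_ne (hP a b) (Ne.symm hab)
    have h1 : 0 < (P ^ k) i a * P a b := mul_pos ((hmemS k a).mp haS) hPab
    refine lt_of_lt_of_le h1 (Finset.single_le_sum (f := fun q => (P ^ k) i q * P q b)
      (fun q _ => mul_nonneg (pow_entry_nonneg hP k i q) (hP q b)) (Finset.mem_univ a))
  have hcard : ∀ k, min (k + 1) m ≤ (S k).card := by
    intro k
    induction k with
    | zero =>
      have : 0 < (S 0).card := Finset.card_pos.mpr ⟨i, hiS 0⟩
      omega
    | succ k ih =>
      by_cases h : S k = Finset.univ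
      · have h2 : (Finset.univ : Finset (Fin m)) ⊆ S (k + 1) := h ▸ hmono k
        have h3 := Finset.card_le_card h2
        rw [Finset.card_univ, Fintype.card_fin] at h3
        omega
      · obtain ⟨l, hl1, hl2⟩ := hgrow k h
        have hss : S k ⊂ S (k + 1) := ⟨hmono k, fun hsub => hl1 (hsub hl2)⟩
        have := Finset.card_lt_card hss
        omega
  have hSfin : S (m - 1) = Finset.univ := by
    apply Finset.eq_univ_of_card
    have h1 := hcard (m - 1)
    have h2 := Finset.card_le_univ (S (m - 1))
    simp only [Finset.card_univ, Fintype.card_fin] at h2 ⊢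
    omega
  have : j ∈ S (m - 1) := hSfin ▸ Finset.mem_univ j
  exact (hmemS _ j).mp this




theorem perron_aux (hm : 0 < m) {M : Matrix (Fin m) (Fin m) ℝ}
    (hM : ∀ i j, 0 ≤ M i j)
    (hQ : ∀ i j, 0 < ((1 + M) ^ (m - 1)) i j) :
    ∃ r : ℝ, ∃ x : Fin m → ℝ, (∀ i, 0 < x i) ∧ M.mulVec x = r • x := by
  classical
  haveI : Nonempty (Fin m) := ⟨⟨0, hm⟩⟩
  set Q : Matrix (Fin m) (Fin m) ℝ := (1 + M) ^ (m - 1) with hQdef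
  set Δ : Set (Fin m → ℝ) := {y | (∀ i, 0 ≤ y i) ∧ ∑ i, y i = 1} with hΔdef
  -- compactness of Δ
  have hΔsub : Δ ⊆ Set.pi Set.univ (fun _ => Set.Icc (0:ℝ) 1) := by
    rintro y ⟨hy0, hy1⟩ i _
    refine ⟨hy0 i, ?_⟩
    rw [← hy1]
    exact Finset.single_le_sum (fun j _ => hy0 j) (Finset.mem_univ i)
  have hΔclosed : IsClosed Δ := by
    have h1 : IsClosed {y : Fin m → ℝ | ∀ i, 0 ≤ y i} := by
      have : {y : Fin m → ℝ | ∀ i, 0 ≤ y i} = ⋂ i, {y | 0 ≤ y i} := by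
        ext y; simp
      rw [this]
      exact isClosed_iInter fun i => isClosed_le continuous_const (continuous_apply i)
    have h2 : IsClosed {y : Fin m → ℝ | ∑ i, y i = 1} :=
      isClosed_eq (continuous_finset_sum _ fun i _ => continuous_apply i) continuous_const
    have : Δ = {y : Fin m → ℝ | ∀ i, 0 ≤ y i} ∩ {y | ∑ i, y i = 1} := rfl
    rw [this]; exact h1.inter h2
  have hΔcomp : IsCompact Δ :=
    (isCompact_univ_pi fun _ => isCompact_Icc).of_isClosed_subset hΔclosed hΔsub
  have hΔne : Δ.Nonempty := by
    refine ⟨fun _ => (m : ℝ)⁻¹, fun i => by positivity, ?_⟩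
    rw [Finset.sum_const, Finset.card_univ, Fintype.card_fin, nsmul_eq_mul]
    field_simp
  -- continuity of mulVec maps
  have hcont : ∀ (N : Matrix (Fin m) (Fin m) ℝ), Continuous (fun y : Fin m → ℝ => N.mulVec y) := by
    intro N
    have := (Matrix.mulVecLin N).continuous_of_finiteDimensional
    exact this
  set K : Set (Fin m → ℝ) := (fun y => Q.mulVec y) '' Δ with hKdef
  have hKcomp : IsCompact K := hΔcomp.image (hcont Q)
  have hKne : K.Nonempty := hΔne.image _
  have hKpos : ∀ x ∈ K, ∀ i, 0 < x i := by
    rintro x ⟨y, hy, rfl⟩ i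
    obtain ⟨j0, hj0⟩ : ∃ j0, y j0 ≠ 0 := by
      by_contra h
      push_neg at h
      have := hy.2
      simp [h] at this
    have hyj0 : 0 < y j0 := lt_of_le_of_ne (hy.1 j0) (Ne.symm hj0)
    simp only [Matrix.mulVec, dotProduct]
    refine Finset.sum_pos' (fun j _ => mul_nonneg (le_of_lt (hQ i j)) (hy.1 j)) ⟨j0, Finset.mem_univ j0, mul_pos (hQ i j0) hyj0⟩
  -- the Collatz-Wielandt functional
  set g : (Fin m → ℝ) → ℝ :=
    fun x => Finset.univ.inf' Finset.univ_nonempty (fun i => M.mulVec x i / x i) with hgdef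
  have hgcont : ContinuousOn g K := by
    apply ContinuousOn.finset_inf'_apply
    intro i _
    apply ContinuousOn.div
    · exact ((continuous_apply i).comp (hcont M)).continuousOn
    · exact (continuous_apply i).continuousOn
    · intro x hx; exact ne_of_gt (hKpos x hx i)
  obtain ⟨xs, hxsK, hxsmax⟩ := hKcomp.exists_isMaxOn hKne hgcont
  set r : ℝ := g xs with hrdef
  have hxspos : ∀ i, 0 < xs i := hKpos xs hxsK
  have hrle : ∀ i, r * xs i ≤ M.mulVec xs i := by
    intro i
    have h1 : r ≤ M.mulVec xs i / xs i := Finset.inf'_le _ (Finset.mem_univ i)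
    exact (le_div_iff₀ (hxspos i)).mp h1
  refine ⟨r, xs, hxspos, ?_⟩
  by_contra hne
  set v : Fin m → ℝ := M.mulVec xs - r • xs with hvdef
  have hv0 : ∀ i, 0 ≤ v i := fun i => by
    simp only [hvdef, Pi.sub_apply, Pi.smul_apply, smul_eq_mul, sub_nonneg]
    exact hrle i
  have hvne : ∃ i0, 0 < v i0 := by
    by_contra h
    push_neg at h
    apply hne
    have : v = 0 := funext fun i => le_antisymm (h i) (hv0 i)
    have := sub_eq_zero.mp (show M.mulVec xs - r • xs = 0 from this)
    exact this
  obtain ⟨i0, hi0⟩ := hvne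
  have hQv : ∀ i, 0 < Q.mulVec v i := by
    intro i
    simp only [Matrix.mulVec, dotProduct]
    refine Finset.sum_pos' (fun j _ => mul_nonneg (le_of_lt (hQ i j)) (hv0 j)) ⟨i0, Finset.mem_univ i0, mul_pos (hQ i i0) hi0⟩
  set σ : ℝ := ∑ i, xs i with hσdef
  have hσpos : 0 < σ := Finset.sum_pos (fun i _ => hxspos i) Finset.univ_nonempty
  have hyΔ : σ⁻¹ • xs ∈ Δ := by
    constructor
    · intro i
      exact mul_nonneg (inv_nonneg.mpr hσpos.le) (hxspos i).le
    · simp only [Pi.smul_apply, smul_eq_mul]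
      rw [← Finset.mul_sum, ← hσdef]
      field_simp
  set z : Fin m → ℝ := Q.mulVec (σ⁻¹ • xs) with hzdef
  have hzK : z ∈ K := ⟨σ⁻¹ • xs, hyΔ, rfl⟩
  have hzpos : ∀ i, 0 < z i := hKpos z hzK
  have hcomm : M * Q = Q * M := by
    have h1 : Commute M (1 + M) := ((Commute.one_right M).add_right (Commute.refl M))
    exact (h1.pow_right (m - 1)).eq
  have hkey : M.mulVec z - r • z = σ⁻¹ • Q.mulVec v := by
    have h1 : M.mulVec z = Q.mulVec (M.mulVec (σ⁻¹ • xs)) := by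
      rw [hzdef, Matrix.mulVec_mulVec, Matrix.mulVec_mulVec, hcomm]
    rw [h1]
    have h2 : M.mulVec (σ⁻¹ • xs) = σ⁻¹ • M.mulVec xs := Matrix.mulVec_smul _ _ _
    rw [h2, hvdef]
    rw [Matrix.mulVec_smul, Matrix.mulVec_sub, Matrix.mulVec_smul]
    ext i
    simp only [Pi.smul_apply, Pi.sub_apply, smul_eq_mul, hzdef]
    rw [Matrix.mulVec_smul]
    simp only [Pi.smul_apply, smul_eq_mul]
    ring
  have hgz : r < g z := by
    rw [hgdef]
    rw [Finset.lt_inf'_iff]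
    intro i _
    rw [lt_div_iff₀ (hzpos i)]
    have := hQv i
    have h3 : M.mulVec z i - r * z i = σ⁻¹ * Q.mulVec v i := by
      have := congrFun hkey i
      simpa using this
    nlinarith [mul_pos (inv_pos.mpr hσpos) (hQv i)]
  exact absurd (hxsmax hzK) (not_le.mpr hgz)




/-- diagonal adjugate entries are diagonal cofactors -/
lemma adjugate_diag_eq_cofactor {n : ℕ} (A : Matrix (Fin (n+1)) (Fin (n+1)) ℝ) (i : Fin (n+1)) :
    A.adjugate i i = cofactor A i i := by
  rw [Matrix.adjugate_apply, Matrix.det_succ_row _ i]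
  rw [Finset.sum_eq_single i]
  · have h1 : A.updateRow i (Pi.single i 1) i i = 1 := by
      rw [Matrix.updateRow_self]; simp
    have h2 : (A.updateRow i (Pi.single i 1)).submatrix i.succAbove i.succAbove
        = A.submatrix i.succAbove i.succAbove := by
      ext a b
      simp only [Matrix.submatrix_apply]
      rw [Matrix.updateRow_ne (Fin.succAbove_ne i a)]
    rw [h1, h2, cofactor]
    ring
  · intro b _ hbi
    have : A.updateRow i (Pi.single i 1) i b = 0 := by
      rw [Matrix.updateRow_self]
      simp [Pi.single_apply, hbi]
    rw [this]
    ring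
  · intro h
    exact absurd (Finset.mem_univ i) h

section Lkernel

variable {L : Matrix (Fin m) (Fin m) ℝ}

/-- essential nonnegativity + zero column sums + cut condition -/
lemma cut_transpose
    (hess : ∀ i j, i ≠ j → 0 ≤ L i j)
    (hcol : ∀ j, ∑ i, L i j = 0)
    (hcut : ∀ S : Set (Fin m), S.Nonempty → S ≠ Set.univ → ∃ i ∈ S, ∃ j ∈ Sᶜ, L i j ≠ 0) :
    ∀ S : Set (Fin m), S.Nonempty → S ≠ Set.univ → ∃ i ∈ S, ∃ j ∈ Sᶜ, 0 < L j i := by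
  classical
  intro S hSne hSu
  by_contra hcon
  push_neg at hcon
  -- all entries L j i with i ∈ S, j ∉ S vanish
  have hzero : ∀ i ∈ S, ∀ j ∈ Sᶜ, L j i = 0 := by
    intro i hi j hj
    have hne : j ≠ i := fun h => hj (h ▸ hi)
    exact le_antisymm (hcon i hi j hj) (hess j i hne)
  -- diagonal entries are nonpositive
  have hdiagL : ∀ i, L i i ≤ 0 := by
    intro i
    have h1 := hcol i
    have h2 : ∑ j ∈ Finset.univ.erase i, L j i ≥ 0 :=
      Finset.sum_nonneg fun j hj => hess j i (Finset.mem_erase.mp hj).1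
    have h3 : ∑ j ∈ Finset.univ.erase i, L j i + L i i = ∑ j, L j i :=
      Finset.sum_erase_add _ _ (Finset.mem_univ i)
    rw [h1] at h3
    linarith
  set c : ℝ := ∑ k, (-L k k) with hc
  have hcnn : ∀ i, -L i i ≤ c :=
    fun i => Finset.single_le_sum (f := fun k => -L k k) (fun k _ => by simpa using neg_nonneg.mpr (hdiagL k)) (Finset.mem_univ i)
  set P : Matrix (Fin m) (Fin m) ℝ := 1 + (c • (1 : Matrix (Fin m) (Fin m) ℝ) + L) with hP
  have hPapply : ∀ i j, P i j = (if i = j then 1 + c else 0) + L i j := by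
    intro i j
    simp [hP, Matrix.one_apply, Matrix.add_apply, Matrix.smul_apply]
    by_cases h : i = j <;> simp [h] <;> ring
  have hPnn : ∀ i j, 0 ≤ P i j := by
    intro i j
    rw [hPapply]
    by_cases h : i = j
    · subst h; simp; linarith [hcnn i]
    · simp [h]; exact hess i j h
  have hPdiag : ∀ i, 0 < P i i := by
    intro i
    rw [hPapply]
    simp
    linarith [hcnn i]
  have hPcut : ∀ S' : Set (Fin m), S'.Nonempty → S' ≠ Set.univ →
      ∃ i ∈ S', ∃ j ∈ S'ᶜ, P i j ≠ 0 := by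
    intro S' h1 h2
    obtain ⟨i, hi, j, hj, hij⟩ := hcut S' h1 h2
    have hne : i ≠ j := fun h => hj (h ▸ hi)
    refine ⟨i, hi, j, hj, ?_⟩
    rw [hPapply]
    simp [hne, hij]
  have hpos := pow_pos_of_cut hPnn hPdiag hPcut
  -- but the block S^c × S of P^k is zero
  have hblock : ∀ k, ∀ p ∈ Sᶜ, ∀ q ∈ S, (P ^ k) p q = 0 := by
    intro k
    induction k with
    | zero =>
      intro p hp q hq
      have : p ≠ q := fun h => hp (h ▸ hq)
      simp [Matrix.one_apply, this]
    | succ k ih =>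
      intro p hp q hq
      rw [pow_succ, Matrix.mul_apply]
      apply Finset.sum_eq_zero
      intro l _
      by_cases hl : l ∈ S
      · rw [ih p hp l hl, zero_mul]
      · have hlq : l ≠ q := fun h => hl (h ▸ hq)
        have : P l q = 0 := by
          rw [hPapply]
          simp [hlq]
          exact hzero q hq l hl
        rw [this, mul_zero]
  obtain ⟨q, hq⟩ := hSne
  obtain ⟨p, hp⟩ : Sᶜ.Nonempty := by
    rw [Set.nonempty_compl]; exact hSu
  exact absurd (hblock (m - 1) p hp q hq) (ne_of_gt (hpos p q))

/-- vectors in the kernel of Lᵀ are constant -/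
lemma kernel_transpose_const
    (hess : ∀ i j, i ≠ j → 0 ≤ L i j)
    (hcol : ∀ j, ∑ i, L i j = 0)
    (hcutT : ∀ S : Set (Fin m), S.Nonempty → S ≠ Set.univ → ∃ i ∈ S, ∃ j ∈ Sᶜ, 0 < L j i)
    (x : Fin m → ℝ) (hx : Lᵀ.mulVec x = 0) : ∀ i j, x i = x j := by
  classical
  rcases Nat.eq_zero_or_pos m with hm | hm
  · intro i; exact absurd i.pos (by omega)
  haveI : Nonempty (Fin m) := ⟨⟨0, hm⟩⟩
  obtain ⟨i0, -, hi0⟩ := Finset.exists_max_image Finset.univ x Finset.univ_nonempty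
  set S : Set (Fin m) := {i | x i = x i0} with hS
  have hSuniv : S = Set.univ := by
    by_contra hSu
    obtain ⟨i, hi, j, hj, hij⟩ := hcutT S ⟨i0, rfl⟩ hSu
    -- i ∈ S is a maximizer; the equation at i forces x j = max for in-neighbors
    have heq : ∑ q, L q i * x q = 0 := by
      have := congrFun hx i
      simpa [Matrix.mulVec, dotProduct, Matrix.transpose_apply] using this
    have heq2 : ∑ q, L q i * (x q - x i0) = 0 := by
      have hsum : ∑ q, L q i * (x q - x i0) = (∑ q, L q i * x q) - (∑ q, L q i) * x i0 := by
        rw [Finset.sum_mul, ← Finset.sum_sub_distrib]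
        congr 1; ext q; ring
      rw [hsum, heq, hcol i, zero_mul, sub_zero]
    have hterm : ∀ q, L q i * (x q - x i0) ≤ 0 := by
      intro q
      by_cases hq : q = i
      · subst hq
        have : x q = x i0 := hi
        rw [this, sub_self, mul_zero]
      · exact mul_nonpos_of_nonneg_of_nonpos (hess q i hq) (by linarith [hi0 q (Finset.mem_univ q)])
    have hall : ∀ q ∈ Finset.univ, L q i * (x q - x i0) = 0 := by
      intro q _
      have h1 := Finset.sum_eq_zero_iff_of_nonpos
        (s := Finset.univ) (f := fun q => L q i * (x q - x i0)) (fun q _ => hterm q)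
      exact (h1.mp heq2) q (Finset.mem_univ q)
    have hj' := hall j (Finset.mem_univ j)
    have : x j - x i0 = 0 := by
      rcases mul_eq_zero.mp hj' with h | h
      · exact absurd h (ne_of_gt hij)
      · exact h
    exact hj (show x j = x i0 by linarith)
  intro i j
  have h1 : x i = x i0 := by have := hSuniv ▸ Set.mem_univ i; exact this
  have h2 : x j = x i0 := by have := hSuniv ▸ Set.mem_univ j; exact this
  rw [h1, h2]

end Lkernel

/-- the cofactor vector is in the kernel of L -/
lemma mulVec_cofactor_eq_zero {n : ℕ} {L : Matrix (Fin (n+1)) (Fin (n+1)) ℝ}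
    (hess : ∀ i j, i ≠ j → 0 ≤ L i j)
    (hcol : ∀ j, ∑ i, L i j = 0)
    (hcut : ∀ S : Set (Fin (n+1)), S.Nonempty → S ≠ Set.univ → ∃ i ∈ S, ∃ j ∈ Sᶜ, L i j ≠ 0) :
    L.mulVec (fun i => cofactor L i i) = 0 := by
  classical
  have hcutT := cut_transpose hess hcol hcut
  -- det L = 0
  have hdet : L.det = 0 := by
    have h1 : Lᵀ.mulVec (fun _ => (1:ℝ)) = 0 := by
      ext i
      simp [Matrix.mulVec, dotProduct, Matrix.transpose_apply]
      exact hcol i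
    have h2 : Lᵀ.det = 0 := by
      rw [← Matrix.exists_mulVec_eq_zero_iff]
      exact ⟨fun _ => 1, fun h => one_ne_zero (congrFun h ⟨0, Nat.succ_pos n⟩), h1⟩
    rw [← Matrix.det_transpose]; exact h2
  -- columns of adjugate Lᵀ are constant
  have hconst : ∀ i k j, Lᵀ.adjugate i j = Lᵀ.adjugate k j := by
    intro i k j
    have h1 : Lᵀ * Lᵀ.adjugate = 0 := by
      rw [Matrix.mul_adjugate, Matrix.det_transpose, hdet, zero_smul]
    have h2 : Lᵀ.mulVec (fun q => Lᵀ.adjugate q j) = 0 := by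
      ext p
      have := congrFun (congrFun h1 p) j
      simpa [Matrix.mul_apply, Matrix.mulVec, dotProduct] using this
    exact kernel_transpose_const hess hcol hcutT _ h2 i k
  -- hence rows of adjugate L are constant; column j of adj L is the diag vector
  have hrow : ∀ i j, L.adjugate i j = L.adjugate i i := by
    intro i j
    have h1 : Lᵀ.adjugate j i = Lᵀ.adjugate i i := hconst j i i
    rw [← Matrix.adjugate_transpose] at h1
    simpa [Matrix.transpose_apply] using h1
  have hLadj : L * L.adjugate = 0 := by
    rw [Matrix.mul_adjugate, hdet, zero_smul]
  have h3 : L.mulVec (fun k => L.adjugate k k) = 0 := by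
    haveI : NeZero (n+1) := ⟨Nat.succ_ne_zero n⟩
    ext p
    have h4 := congrFun (congrFun hLadj p) 0
    simp only [Matrix.mul_apply, Matrix.zero_apply] at h4
    have h5 : ∑ k, L p k * L.adjugate k (0 : Fin (n+1)) = ∑ k, L p k * L.adjugate k k := by
      apply Finset.sum_congr rfl
      intro k _
      rw [hrow k (0 : Fin (n+1))]
    simp only [Matrix.mulVec, dotProduct, Pi.zero_apply]
    rw [← h5, h4]
  have h6 : (fun k => L.adjugate k k) = (fun k => cofactor L k k) := by
    funext k; exact adjugate_diag_eq_cofactor L k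
  rw [← h6]
  exact h3





lemma sum_erase_comm (h : Fin m → Fin m → ℝ) :
    ∑ i, ∑ j ∈ Finset.univ.erase i, h i j = ∑ j, ∑ i ∈ Finset.univ.erase j, h i j := by
  have e1 : ∀ i, ∑ j ∈ Finset.univ.erase i, h i j = (∑ j, h i j) - h i i :=
    fun i => Finset.sum_erase_eq_sub (Finset.mem_univ i)
  have e2 : ∀ j, ∑ i ∈ Finset.univ.erase j, h i j = (∑ i, h i j) - h j j :=
    fun j => Finset.sum_erase_eq_sub (f := fun i => h i j) (Finset.mem_univ j)
  simp only [e1, e2]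
  rw [Finset.sum_sub_distrib, Finset.sum_sub_distrib, Finset.sum_comm]

lemma key_ineq {L : Matrix (Fin m) (Fin m) ℝ}
    (hess : ∀ i j, i ≠ j → 0 ≤ L i j)
    (hcol : ∀ j, ∑ i, L i j = 0)
    {w u : Fin m → ℝ} (hwpos : ∀ i, 0 < w i) (hupos : ∀ i, 0 < u i)
    (hw0 : L.mulVec w = 0) :
    0 ≤ ∑ i, (w i / u i) * L.mulVec u i ∧
    (∑ i, (w i / u i) * L.mulVec u i = 0 →
      ∀ i j, i ≠ j → 0 < L i j → w i * u j = w j * u i) := by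
  classical
  set X : Fin m → Fin m → ℝ := fun i j => (w i * u j) / (w j * u i) with hXdef
  set F : Fin m → ℝ := fun k => Real.log (w k / u k) with hFdef
  have hXpos : ∀ i j, 0 < X i j := fun i j =>
    div_pos (mul_pos (hwpos i) (hupos j)) (mul_pos (hwpos j) (hupos i))
  have hlog : ∀ i j, Real.log (X i j) = F i - F j := by
    intro i j
    have h1 : X i j = (w i / u i) / (w j / u j) := by
      rw [hXdef]
      field_simp
    rw [h1, hFdef, Real.log_div (div_pos (hwpos i) (hupos i)).ne'
      (div_pos (hwpos j) (hupos j)).ne']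
  have hmv : ∀ (v : Fin m → ℝ) i, L.mulVec v i = ∑ j, L i j * v j := by
    intro v i; simp [Matrix.mulVec, dotProduct]
  have diag_id : ∀ i, w i * L i i = - ∑ j ∈ Finset.univ.erase i, L i j * w j := by
    intro i
    have h := congrFun hw0 i
    rw [Pi.zero_apply, hmv w i] at h
    have h2 : (∑ j ∈ Finset.univ.erase i, L i j * w j) + L i i * w i = ∑ j, L i j * w j :=
      Finset.sum_erase_add _ _ (Finset.mem_univ i)
    rw [h] at h2
    rw [mul_comm]
    linarith
  have colsum_id : ∀ j, ∑ i ∈ Finset.univ.erase j, L i j = - L j j := by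
    intro j
    have h := hcol j
    have h2 : (∑ i ∈ Finset.univ.erase j, L i j) + L j j = ∑ i, L i j :=
      Finset.sum_erase_add _ _ (Finset.mem_univ j)
    rw [h] at h2
    linarith
  have key_id : ∀ i, (w i / u i) * L.mulVec u i
      = w i * L i i + ∑ j ∈ Finset.univ.erase i, L i j * w j * X i j := by
    intro i
    rw [hmv u i]
    rw [← Finset.sum_erase_add _ _ (Finset.mem_univ i), mul_add, Finset.mul_sum]
    have hui := (hupos i).ne'
    have t1 : (w i / u i) * (L i i * u i) = w i * L i i := by
      field_simp
    have t2 : ∀ j ∈ Finset.univ.erase i, (w i / u i) * (L i j * u j)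
        = L i j * w j * X i j := by
      intro j _
      rw [hXdef]
      have hwj := (hwpos j).ne'
      field_simp
    rw [t1, Finset.sum_congr rfl t2]
    ring
  have Esum : ∑ i, ∑ j ∈ Finset.univ.erase i, L i j * w j * (F i - F j) = 0 := by
    have split : ∀ i, ∑ j ∈ Finset.univ.erase i, L i j * w j * (F i - F j)
        = (∑ j ∈ Finset.univ.erase i, L i j * w j * F i)
          - ∑ j ∈ Finset.univ.erase i, L i j * w j * F j := by
      intro i
      rw [← Finset.sum_sub_distrib]
      apply Finset.sum_congr rfl
      intro j _
      ring
    simp only [split]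
    rw [Finset.sum_sub_distrib]
    have e1 : ∀ i, ∑ j ∈ Finset.univ.erase i, L i j * w j * F i
        = -(w i * L i i) * F i := by
      intro i
      rw [← Finset.sum_mul,
        show (∑ j ∈ Finset.univ.erase i, L i j * w j) = -(w i * L i i) by linarith [diag_id i]]
    have e2 : ∑ i, ∑ j ∈ Finset.univ.erase i, L i j * w j * F j
        = ∑ j, (-(L j j)) * (w j * F j) := by
      rw [sum_erase_comm (fun i j => L i j * w j * F j)]
      apply Finset.sum_congr rfl
      intro j _
      have : ∑ i ∈ Finset.univ.erase j, L i j * w j * F j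
          = (∑ i ∈ Finset.univ.erase j, L i j) * (w j * F j) := by
        rw [Finset.sum_mul]
        apply Finset.sum_congr rfl
        intro i _
        ring
      rw [this, colsum_id j]
    rw [e2]
    simp only [e1]
    rw [← Finset.sum_sub_distrib]
    apply Finset.sum_eq_zero
    intro i _
    ring
  have main_id : ∑ i, (w i / u i) * L.mulVec u i
      = ∑ i, ∑ j ∈ Finset.univ.erase i, (L i j * w j) * (X i j - 1 - Real.log (X i j)) := by
    have expand : ∀ i, ∑ j ∈ Finset.univ.erase i, (L i j * w j) * (X i j - 1 - Real.log (X i j))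
        = (∑ j ∈ Finset.univ.erase i, L i j * w j * X i j)
          - (∑ j ∈ Finset.univ.erase i, L i j * w j)
          - ∑ j ∈ Finset.univ.erase i, L i j * w j * (F i - F j) := by
      intro i
      rw [← Finset.sum_sub_distrib, ← Finset.sum_sub_distrib]
      apply Finset.sum_congr rfl
      intro j _
      rw [hlog i j]
      ring
    simp only [expand]
    rw [Finset.sum_sub_distrib, Esum, sub_zero, Finset.sum_sub_distrib]
    simp only [key_id]
    rw [Finset.sum_add_distrib]
    have : ∑ i, w i * L i i = - ∑ i, ∑ j ∈ Finset.univ.erase i, L i j * w j := by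
      rw [← Finset.sum_neg_distrib]
      exact Finset.sum_congr rfl fun i _ => diag_id i
    rw [this]
    ring
  have term_nonneg : ∀ i, ∀ j ∈ Finset.univ.erase i,
      0 ≤ (L i j * w j) * (X i j - 1 - Real.log (X i j)) := by
    intro i j hj
    have hji : j ≠ i := (Finset.mem_erase.mp hj).1
    apply mul_nonneg
    · exact mul_nonneg (hess i j (Ne.symm hji)) (hwpos j).le
    · have := Real.log_le_sub_one_of_pos (hXpos i j)
      linarith
  constructor
  · rw [main_id]
    exact Finset.sum_nonneg fun i _ => Finset.sum_nonneg fun j hj => term_nonneg i j hj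
  · intro hT i j hij hLij
    rw [main_id] at hT
    have houter := (Finset.sum_eq_zero_iff_of_nonneg
      (fun i _ => Finset.sum_nonneg fun j hj => term_nonneg i j hj)).mp hT i (Finset.mem_univ i)
    have hjmem : j ∈ Finset.univ.erase i := Finset.mem_erase.mpr ⟨Ne.symm hij, Finset.mem_univ j⟩
    have hinner := (Finset.sum_eq_zero_iff_of_nonneg
      (fun j hj => term_nonneg i j hj)).mp houter j hjmem
    have hcoef : 0 < L i j * w j := mul_pos hLij (hwpos j)
    have hbr : X i j - 1 - Real.log (X i j) = 0 := by
      rcases mul_eq_zero.mp hinner with h | h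
      · exact absurd h hcoef.ne'
      · exact h
    have hX1 : X i j = 1 := by
      by_contra hne
      have := Real.log_lt_sub_one_of_pos (hXpos i j) hne
      linarith
    have hden : w j * u i ≠ 0 := (mul_pos (hwpos j) (hupos i)).ne'
    have := (div_eq_one_iff_eq hden).mp hX1
    linarith



section Mmatrix

variable {W : Matrix (Fin m) (Fin m) ℝ}

/-- inverse positivity for row-dominant matrices with nonpositive off-diagonal -/
lemma inv_pos_of_dominant
    (hoff : ∀ i j, i ≠ j → W i j ≤ 0) (hrow : ∀ i, 0 < ∑ j, W i j) :
    ∀ x : Fin m → ℝ, (∀ i, 0 ≤ W.mulVec x i) → ∀ i, 0 ≤ x i := by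
  classical
  intro x hWx
  by_contra hcon
  push_neg at hcon
  obtain ⟨i1, hi1⟩ := hcon
  haveI : Nonempty (Fin m) := ⟨i1⟩
  obtain ⟨i0, -, hi0⟩ := Finset.exists_min_image Finset.univ x Finset.univ_nonempty
  have hm0 : x i0 < 0 := lt_of_le_of_lt (hi0 i1 (Finset.mem_univ i1)) hi1
  have h1 : ∑ j, W i0 j * x j = ∑ j, W i0 j * (x j - x i0) + (∑ j, W i0 j) * x i0 := by
    rw [Finset.sum_mul, ← Finset.sum_add_distrib]
    apply Finset.sum_congr rfl
    intro j _
    ring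
  have h2 : ∑ j, W i0 j * (x j - x i0) ≤ 0 := by
    apply Finset.sum_nonpos
    intro j _
    by_cases hj : j = i0
    · subst hj; rw [sub_self, mul_zero]
    · exact mul_nonpos_of_nonpos_of_nonneg (hoff i0 j (Ne.symm hj))
        (by linarith [hi0 j (Finset.mem_univ j)])
  have h3 : (∑ j, W i0 j) * x i0 < 0 := mul_neg_of_pos_of_neg (hrow i0) hm0
  have h4 := hWx i0
  have h5 : W.mulVec x i0 = ∑ j, W i0 j * x j := by
    simp [Matrix.mulVec, dotProduct]
  rw [h5, h1] at h4
  linarith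

lemma det_ne_zero_of_dominant
    (hoff : ∀ i j, i ≠ j → W i j ≤ 0) (hrow : ∀ i, 0 < ∑ j, W i j) :
    W.det ≠ 0 := by
  intro hdet
  obtain ⟨v, hvne, hv⟩ := (Matrix.exists_mulVec_eq_zero_iff).mpr hdet
  have h1 : ∀ i, 0 ≤ v i := by
    apply inv_pos_of_dominant hoff hrow
    intro i; rw [hv]; simp
  have h2 : ∀ i, 0 ≤ -v i := by
    apply inv_pos_of_dominant hoff hrow
    intro i
    rw [show W.mulVec (fun j => -v j) = - W.mulVec v by
      rw [← Matrix.mulVec_neg]; rfl]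
    rw [hv]; simp
  exact hvne (funext fun i => by simp only [Pi.zero_apply]; linarith [h1 i, h2 i])

/-- with the cut condition, nonnegative preimages of nonnegative nonzero vectors are positive -/
lemma pos_of_dominant_cut
    (hoff : ∀ i j, i ≠ j → W i j ≤ 0)
    (hcut : ∀ S : Set (Fin m), S.Nonempty → S ≠ Set.univ → ∃ i ∈ S, ∃ j ∈ Sᶜ, W i j ≠ 0)
    (x : Fin m → ℝ) (hx0 : ∀ i, 0 ≤ x i) (hxne : x ≠ 0)
    (hWx : ∀ i, 0 ≤ W.mulVec x i) : ∀ i, 0 < x i := by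
  classical
  set S : Set (Fin m) := {i | x i = 0} with hS
  have hSnu : S ≠ Set.univ := by
    intro h
    apply hxne
    funext i
    have : i ∈ S := h ▸ Set.mem_univ i
    exact this
  rcases Set.eq_empty_or_nonempty S with hSe | hSne
  · intro i
    have : i ∉ S := hSe ▸ Set.notMem_empty i
    exact lt_of_le_of_ne (hx0 i) (Ne.symm this)
  · exfalso
    obtain ⟨i, hi, j, hj, hWij⟩ := hcut S hSne hSnu
    have hxj : 0 < x j := lt_of_le_of_ne (hx0 j) (Ne.symm hj)
    have hij : i ≠ j := fun h => hj (h ▸ hi)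
    have h1 : W.mulVec x i = ∑ q, W i q * x q := by simp [Matrix.mulVec, dotProduct]
    have h2 : ∀ q, W i q * x q ≤ 0 := by
      intro q
      by_cases hq : q ∈ S
      · have : x q = 0 := hq
        rw [this, mul_zero]
      · exact mul_nonpos_of_nonpos_of_nonneg (hoff i q (fun h => hq (h ▸ hi))) (hx0 q)
    have h3 : W i j * x j < 0 :=
      mul_neg_of_neg_of_pos (lt_of_le_of_ne (hoff i j hij) hWij) hxj
    have h4 : ∑ q, W i q * x q < ∑ _q : Fin m, (0:ℝ) :=
      Finset.sum_lt_sum (fun q _ => h2 q) ⟨j, Finset.mem_univ j, h3⟩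
    rw [Finset.sum_const_zero] at h4
    have h5 := hWx i
    rw [h1] at h5
    linarith

end Mmatrix

/-- evaluation of the characteristic polynomial -/
lemma charpoly_eval {K : Type*} [Field K] (M : Matrix (Fin m) (Fin m) K) (t : K) :
    M.charpoly.eval t = (t • (1 : Matrix (Fin m) (Fin m) K) - M).det := by
  rw [Matrix.charpoly, ← Polynomial.coe_evalRingHom, RingHom.map_det]
  congr 1
  ext i j
  by_cases h : i = j
  · subst h
    simp [Matrix.charmatrix_apply_eq, Matrix.one_apply]
  · simp [Matrix.charmatrix_apply_ne _ _ _ h, Matrix.one_apply, h]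

lemma specRad_gt_of_root {G : Matrix (Fin m) (Fin m) ℝ} {t : ℝ} (ht : 1 < t)
    (hdet : (t • (1 : Matrix (Fin m) (Fin m) ℝ) - G).det = 0) :
    1 < specRad G := by
  set p : Polynomial ℂ := (G.map Complex.ofReal).charpoly with hp
  have hroot : p.IsRoot (t : ℂ) := by
    show p.eval (t : ℂ) = 0
    rw [hp, charpoly_eval]
    have hmap : (t : ℂ) • (1 : Matrix (Fin m) (Fin m) ℂ) - G.map Complex.ofReal
        = ((t • (1 : Matrix (Fin m) (Fin m) ℝ) - G)).map Complex.ofReal := by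
      ext i j
      by_cases h : i = j <;>
        simp [Matrix.map_apply, Matrix.one_apply, Matrix.smul_apply, Matrix.sub_apply, h]
    rw [hmap]
    rw [show ((t • (1 : Matrix (Fin m) (Fin m) ℝ) - G)).map Complex.ofReal
        = (Complex.ofRealHom).mapMatrix ((t • (1 : Matrix (Fin m) (Fin m) ℝ) - G)) from rfl]
    rw [← RingHom.map_det, hdet, map_zero]
  have hpne : p ≠ 0 := (Matrix.charpoly_monic _).ne_zero
  have hfin : {x : ℝ | ∃ μ : ℂ, p.IsRoot μ ∧ ‖μ‖ = x}.Finite := by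
    have h1 : {x : ℝ | ∃ μ : ℂ, p.IsRoot μ ∧ ‖μ‖ = x}
        = (fun μ : ℂ => ‖μ‖) '' {μ : ℂ | p.IsRoot μ} := by
      ext x
      simp [Set.mem_image]
    rw [h1]
    exact (Polynomial.finite_setOf_isRoot hpne).image _
  have hmem : t ∈ {x : ℝ | ∃ μ : ℂ, p.IsRoot μ ∧ ‖μ‖ = x} := by
    refine ⟨(t : ℂ), hroot, ?_⟩
    rw [Complex.norm_real, Real.norm_eq_abs, abs_of_pos (by linarith)]
  calc (1:ℝ) < t := ht
    _ ≤ specRad G := le_csSup hfin.bddAbove hmem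


end R0Aux

/-- (high-risk domain) If `Σ β_i·w_i ≥ Σ γ_i·w_i` with `w_i = (-1)^n·C_{ii} > 0`,
then `R0(d) > 1` for all `d ≥ 0`. -/
theorem R0_gt_one_high_risk {n : ℕ} (hn : 1 ≤ n)
    (L : Matrix (Fin (n+1)) (Fin (n+1)) ℝ)
    (hess : ∀ i j, i ≠ j → 0 ≤ L i j)
    (hirr : IsIrreducibleMatrix L)
    (hcol : ∀ j, ∑ i, L i j = 0)
    (β γ : Fin (n+1) → ℝ) (hβ : ∀ i, 0 < β i) (hγ : ∀ i, 0 < γ i)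
    (hhet : ∃ i j, i ≠ j ∧ β i / γ i ≠ β j / γ j)
    (w : Fin (n+1) → ℝ) (hw : ∀ i, w i = (-1 : ℝ) ^ n * cofactor L i i)
    (hwpos : ∀ i, 0 < w i)
    (hhigh : ∑ i, γ i * w i ≤ ∑ i, β i * w i) :
    ∀ d : ℝ, 0 ≤ d →
      1 < specRad (Matrix.diagonal β * (Matrix.diagonal γ - d • L)⁻¹) := by
  classical
  intro d hd
  -- abbreviations
  have hcutL : ∀ S : Set (Fin (n+1)), S.Nonempty → S ≠ Set.univ →
      ∃ i ∈ S, ∃ j ∈ Sᶜ, 0 < L i j := by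
    intro S h1 h2
    obtain ⟨i, hi, j, hj, hij⟩ := hirr S h1 h2
    exact ⟨i, hi, j, hj, lt_of_le_of_ne (hess i j (fun h => hj (h ▸ hi))) (Ne.symm hij)⟩
  have hcutT := R0Aux.cut_transpose hess hcol hirr
  have hLdiag : ∀ i, L i i ≤ 0 := by
    intro i
    have h1 := hcol i
    have h2 : (0:ℝ) ≤ ∑ j ∈ Finset.univ.erase i, L j i :=
      Finset.sum_nonneg fun j hj => hess j i (Finset.mem_erase.mp hj).1
    have h3 : ∑ j ∈ Finset.univ.erase i, L j i + L i i = ∑ j, L j i :=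
      Finset.sum_erase_add _ _ (Finset.mem_univ i)
    rw [h1] at h3
    linarith
  have hw0 : L.mulVec w = 0 := by
    have h1 : w = ((-1:ℝ)^n) • (fun i => cofactor L i i) := by
      funext i
      rw [hw i]
      simp
    rw [h1, Matrix.mulVec_smul, R0Aux.mulVec_cofactor_eq_zero hess hcol hirr, smul_zero]
  -- rule out β = γ
  have hβγ : ¬ (∀ i, β i = γ i) := by
    intro hall
    obtain ⟨i, j, hij, hne⟩ := hhet
    apply hne
    rw [hall i, hall j, div_self (hγ i).ne', div_self (hγ j).ne']
  rcases eq_or_lt_of_le hd with hd0 | hdpos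
  · -- case d = 0
    obtain ⟨i0, hi0⟩ : ∃ i0, γ i0 < β i0 := by
      by_contra hcon
      push_neg at hcon
      have h1 : ∀ i ∈ Finset.univ, β i * w i ≤ γ i * w i :=
        fun i _ => mul_le_mul_of_nonneg_right (hcon i) (hwpos i).le
      have h2 : ∑ i, β i * w i = ∑ i, γ i * w i :=
        le_antisymm (Finset.sum_le_sum h1) hhigh
      have h3 := (Finset.sum_eq_sum_iff_of_le h1).mp h2
      apply hβγ
      intro i
      have := h3 i (Finset.mem_univ i)
      have hwne := (hwpos i).ne'
      field_simp at this
      exact this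
    have hinv : (Matrix.diagonal γ)⁻¹ = Matrix.diagonal (fun i => (γ i)⁻¹) := by
      apply Matrix.inv_eq_right_inv
      rw [Matrix.diagonal_mul_diagonal]
      have : (fun i => γ i * (γ i)⁻¹) = fun _ => (1:ℝ) := by
        funext i
        exact mul_inv_cancel₀ (hγ i).ne'
      rw [this, Matrix.diagonal_one]
    have hG : Matrix.diagonal β * (Matrix.diagonal γ - d • L)⁻¹
        = Matrix.diagonal (fun i => β i * (γ i)⁻¹) := by
      rw [← hd0, zero_smul, sub_zero, hinv, Matrix.diagonal_mul_diagonal]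
    set t : ℝ := β i0 / γ i0 with htdef
    have ht : 1 < t := (one_lt_div (hγ i0)).mpr hi0
    have hdet : (t • (1 : Matrix (Fin (n+1)) (Fin (n+1)) ℝ)
        - Matrix.diagonal β * (Matrix.diagonal γ - d • L)⁻¹).det = 0 := by
      rw [hG]
      have h1 : t • (1 : Matrix (Fin (n+1)) (Fin (n+1)) ℝ)
          - Matrix.diagonal (fun i => β i * (γ i)⁻¹)
          = Matrix.diagonal (fun i => t - β i * (γ i)⁻¹) := by
        ext i j
        by_cases h : i = j <;>
          simp [Matrix.diagonal_apply, Matrix.one_apply, Matrix.smul_apply,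
            Matrix.sub_apply, h]
      rw [h1, Matrix.det_diagonal]
      apply Finset.prod_eq_zero (Finset.mem_univ i0)
      rw [htdef, div_eq_mul_inv]
      ring
    exact R0Aux.specRad_gt_of_root ht hdet
  · -- case d > 0
    have hm : 0 < n + 1 := Nat.succ_pos n
    set A : Matrix (Fin (n+1)) (Fin (n+1)) ℝ :=
      Matrix.diagonal (fun i => β i - γ i) + d • L with hAdef
    have hAapply : ∀ i j, A i j = (if i = j then β i - γ i else 0) + d * L i j := by
      intro i j
      simp [hAdef, Matrix.add_apply, Matrix.smul_apply, Matrix.diagonal_apply, smul_eq_mul]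
    -- Perron eigenvector for A
    set c : ℝ := ∑ k, (|β k - γ k| + d * (-L k k)) with hcdef
    have hck : ∀ i, |β i - γ i| + d * (-L i i) ≤ c := by
      intro i
      apply Finset.single_le_sum (f := fun k => |β k - γ k| + d * (-L k k))
        (fun k _ => add_nonneg (abs_nonneg _)
          (mul_nonneg hdpos.le (neg_nonneg.mpr (hLdiag k)))) (Finset.mem_univ i)
    set M1 : Matrix (Fin (n+1)) (Fin (n+1)) ℝ := c • 1 + A with hM1def
    have hM1apply : ∀ i j, M1 i j = (if i = j then c else 0) + A i j := by
      intro i j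
      simp [hM1def, Matrix.add_apply, Matrix.smul_apply, Matrix.one_apply, smul_eq_mul,
        mul_ite, mul_one, mul_zero]
    have hM1nn : ∀ i j, 0 ≤ M1 i j := by
      intro i j
      rw [hM1apply, hAapply]
      by_cases h : i = j
      · subst h
        simp only [eq_self_iff_true, if_true]
        have h1 := hck i
        have h2 : -(|β i - γ i|) ≤ β i - γ i := neg_abs_le _
        nlinarith
      · simp only [if_neg h]
        have := mul_nonneg hdpos.le (hess i j h)
        linarith
    have hQ1 : ∀ i j, 0 < ((1 + M1) ^ (n + 1 - 1)) i j := by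
      apply R0Aux.pow_pos_of_cut
      · intro i j
        rw [Matrix.add_apply, Matrix.one_apply]
        have := hM1nn i j
        split <;> linarith
      · intro i
        rw [Matrix.add_apply, Matrix.one_apply, if_pos rfl]
        linarith [hM1nn i i]
      · intro S h1 h2
        obtain ⟨i, hi, j, hj, hij⟩ := hcutL S h1 h2
        have hne : i ≠ j := fun h => hj (h ▸ hi)
        refine ⟨i, hi, j, hj, ?_⟩
        have hval : (1 + M1) i j = d * L i j := by
          rw [Matrix.add_apply, Matrix.one_apply, if_neg hne, hM1apply, hAapply,
            if_neg hne, if_neg hne]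
          ring
        rw [hval]
        exact (mul_pos hdpos hij).ne'
    obtain ⟨r1, u, hupos, hMu⟩ := R0Aux.perron_aux hm hM1nn hQ1
    set s : ℝ := r1 - c with hsdef
    have hAu : A.mulVec u = s • u := by
      have h1 : M1.mulVec u = c • u + A.mulVec u := by
        rw [hM1def, Matrix.add_mulVec, Matrix.smul_mulVec, Matrix.one_mulVec]
      rw [h1] at hMu
      have : A.mulVec u = r1 • u - c • u := by
        rw [← hMu]; abel
      rw [this, hsdef, sub_smul]
    have hAu_i : ∀ i, A.mulVec u i = (β i - γ i) * u i + d * L.mulVec u i := by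
      intro i
      rw [hAdef, Matrix.add_mulVec, Matrix.smul_mulVec]
      simp only [Pi.add_apply, Pi.smul_apply, smul_eq_mul]
      rw [Matrix.mulVec_diagonal]
    -- the spectral bound identity
    set T : ℝ := ∑ i, (w i / u i) * L.mulVec u i with hTdef
    have hsid : s * (∑ i, w i) = (∑ i, (β i - γ i) * w i) + d * T := by
      have c1 : ∑ i, (w i / u i) * A.mulVec u i = s * ∑ i, w i := by
        rw [Finset.mul_sum]
        apply Finset.sum_congr rfl
        intro i _
        rw [hAu]
        simp only [Pi.smul_apply, smul_eq_mul]
        rw [show (w i / u i) * (s * u i) = s * ((w i / u i) * u i) from by ring,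
          div_mul_cancel₀ _ (hupos i).ne']
      have c2 : ∑ i, (w i / u i) * A.mulVec u i
          = (∑ i, (β i - γ i) * w i) + d * T := by
        rw [hTdef, Finset.mul_sum, ← Finset.sum_add_distrib]
        apply Finset.sum_congr rfl
        intro i _
        rw [hAu_i i]
        have hui := (hupos i).ne'
        field_simp
      rw [← c1, c2]
    have hsumw : 0 < ∑ i, w i := Finset.sum_pos (fun i _ => hwpos i) Finset.univ_nonempty
    have hβγw : 0 ≤ ∑ i, (β i - γ i) * w i := by
      have h1 : ∑ i, (β i - γ i) * w i = (∑ i, β i * w i) - ∑ i, γ i * w i := by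
        rw [← Finset.sum_sub_distrib]
        apply Finset.sum_congr rfl
        intro i _
        ring
      rw [h1]
      linarith
    obtain ⟨hT0, hTeq⟩ := R0Aux.key_ineq hess hcol hwpos hupos hw0
    rw [← hTdef] at hT0 hTeq
    have hs0 : 0 ≤ s := by
      by_contra hcon
      push_neg at hcon
      have h1 : s * (∑ i, w i) < 0 := mul_neg_of_neg_of_pos hcon hsumw
      nlinarith [mul_nonneg hdpos.le hT0]
    have hspos : 0 < s := by
      rcases lt_or_eq_of_le hs0 with h | h
      · exact h
      · exfalso
        have h1 : s * (∑ i, w i) = 0 := by rw [← h, zero_mul]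
        have h2 : d * T = 0 := by nlinarith [mul_nonneg hdpos.le hT0]
        have hTz : T = 0 := by
          rcases mul_eq_zero.mp h2 with h' | h'
          · exact absurd h' hdpos.ne'
          · exact h'
        have hrel := hTeq hTz
        -- ratios u/w are constant
        obtain ⟨i0, -, hi0⟩ := Finset.exists_max_image Finset.univ
          (fun i => u i / w i) Finset.univ_nonempty
        set S : Set (Fin (n+1)) := {i | u i / w i = u i0 / w i0} with hSdef
        have hSuniv : S = Set.univ := by
          by_contra hSu
          obtain ⟨i, hi, j, hj, hij⟩ := hcutL S ⟨i0, rfl⟩ hSu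
          have hijne : i ≠ j := fun h => hj (h ▸ hi)
          have h3 : w i * u j = w j * u i := hrel i j hijne hij
          apply hj
          have h4 : u j / w j = u i / w i := by
            rw [div_eq_div_iff (hwpos j).ne' (hwpos i).ne']
            linarith
          have h5 : u i / w i = u i0 / w i0 := hi
          show u j / w j = u i0 / w i0
          rw [h4, h5]
        have hconst : ∀ i, u i = (u i0 / w i0) * w i := by
          intro i
          have h6 : i ∈ S := hSuniv ▸ Set.mem_univ i
          have h7 : u i / w i = u i0 / w i0 := h6
          rw [← h7]
          exact (div_mul_cancel₀ _ (hwpos i).ne').symm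
        have hLu : L.mulVec u = 0 := by
          have : u = (u i0 / w i0) • w := funext fun i => by
            simp [hconst i]
          rw [this, Matrix.mulVec_smul, hw0, smul_zero]
        have hβγ' : ∀ i, β i = γ i := by
          intro i
          have h8 := hAu_i i
          rw [hAu, hLu] at h8
          simp only [Pi.smul_apply, smul_eq_mul, Pi.zero_apply, mul_zero, add_zero] at h8
          rw [← h, zero_mul] at h8
          have h9 : (β i - γ i) * u i = 0 := h8.symm
          rcases mul_eq_zero.mp h9 with h' | h'
          · linarith
          · exact absurd h' (hupos i).ne'
        exact hβγ hβγ'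
    -- V-matrix machinery
    set V : Matrix (Fin (n+1)) (Fin (n+1)) ℝ := Matrix.diagonal γ - d • L with hVdef
    have hVapply : ∀ i j, V i j = (if i = j then γ i else 0) - d * L i j := by
      intro i j
      simp [hVdef, Matrix.sub_apply, Matrix.smul_apply, Matrix.diagonal_apply, smul_eq_mul]
    have hoffVT : ∀ i j, i ≠ j → Vᵀ i j ≤ 0 := by
      intro i j hij
      rw [Matrix.transpose_apply, hVapply, if_neg (Ne.symm hij)]
      have := mul_nonneg hdpos.le (hess j i (Ne.symm hij))
      linarith
    have hrowVT : ∀ i, 0 < ∑ j, Vᵀ i j := by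
      intro i
      have h1 : ∑ j, Vᵀ i j = γ i - d * ∑ j, L j i := by
        simp only [Matrix.transpose_apply, hVapply]
        rw [Finset.sum_sub_distrib, ← Finset.mul_sum]
        congr 1
        simp
      rw [h1, hcol i, mul_zero, sub_zero]
      exact hγ i
    have hdetVT : Vᵀ.det ≠ 0 := R0Aux.det_ne_zero_of_dominant hoffVT hrowVT
    have hdetV : V.det ≠ 0 := by
      rw [← Matrix.det_transpose]; exact hdetVT
    have hVunit : IsUnit V.det := isUnit_iff_ne_zero.mpr hdetV
    have hVTunit : IsUnit Vᵀ.det := isUnit_iff_ne_zero.mpr hdetVT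
    have hcutVT : ∀ S : Set (Fin (n+1)), S.Nonempty → S ≠ Set.univ →
        ∃ i ∈ S, ∃ j ∈ Sᶜ, Vᵀ i j ≠ 0 := by
      intro S h1 h2
      obtain ⟨i, hi, j, hj, hij⟩ := hcutT S h1 h2
      refine ⟨i, hi, j, hj, ?_⟩
      rw [Matrix.transpose_apply, hVapply, if_neg (fun h : j = i => hj (h ▸ hi))]
      simp only [zero_sub, neg_ne_zero]
      exact (mul_pos hdpos hij).ne'
    have hinvVT : ∀ i k, 0 < (Vᵀ)⁻¹ i k := by
      intro i k
      set x : Fin (n+1) → ℝ := fun q => (Vᵀ)⁻¹ q k with hxdef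
      have hVx : ∀ p, Vᵀ.mulVec x p = if p = k then 1 else 0 := by
        intro p
        have h1 := congrFun (congrFun (Matrix.mul_nonsing_inv Vᵀ hVTunit) p) k
        simp only [Matrix.mul_apply, Matrix.one_apply] at h1
        simpa [Matrix.mulVec, dotProduct, hxdef] using h1
      have hx0 : ∀ q, 0 ≤ x q := by
        apply R0Aux.inv_pos_of_dominant hoffVT hrowVT
        intro p
        rw [hVx p]
        split <;> norm_num
      have hxne : x ≠ 0 := by
        intro hcon
        have h1 := hVx k
        rw [hcon, Matrix.mulVec_zero] at h1
        simp at h1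
      exact R0Aux.pos_of_dominant_cut hoffVT hcutVT x hx0 hxne
        (fun p => by rw [hVx p]; split <;> norm_num) i
    have hVinv : ∀ i k, 0 < V⁻¹ i k := by
      intro i k
      have h1 : V⁻¹ i k = (Vᵀ)⁻¹ k i := by
        rw [← Matrix.transpose_nonsing_inv]
        rfl
      rw [h1]
      exact hinvVT k i
    -- the eigenvalue relation for V⁻¹ * diagonal β
    have hAV : A = Matrix.diagonal β - V := by
      ext i j
      rw [hAapply, Matrix.sub_apply, hVapply]
      by_cases h : i = j <;> simp [Matrix.diagonal_apply, h] <;> ring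
    have hFu : (Matrix.diagonal β).mulVec u = V.mulVec u + s • u := by
      have h1 := hAu
      rw [hAV, Matrix.sub_mulVec] at h1
      funext i
      have h2 := congrFun h1 i
      simp only [Pi.sub_apply, Pi.add_apply, Pi.smul_apply, smul_eq_mul] at h2 ⊢
      linarith
    have hBu : (V⁻¹ * Matrix.diagonal β).mulVec u = u + s • V⁻¹.mulVec u := by
      rw [← Matrix.mulVec_mulVec, hFu, Matrix.mulVec_add, Matrix.mulVec_mulVec,
        Matrix.nonsing_inv_mul V hVunit, Matrix.one_mulVec, Matrix.mulVec_smul]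
    -- Perron for the transpose
    set M2 : Matrix (Fin (n+1)) (Fin (n+1)) ℝ := (V⁻¹ * Matrix.diagonal β)ᵀ with hM2def
    have hM2pos : ∀ i j, 0 < M2 i j := by
      intro i j
      rw [hM2def, Matrix.transpose_apply, Matrix.mul_diagonal]
      exact mul_pos (hVinv j i) (hβ i)
    have hQ2 : ∀ i j, 0 < ((1 + M2) ^ (n + 1 - 1)) i j := by
      apply R0Aux.pow_pos_of_cut
      · intro i j
        rw [Matrix.add_apply, Matrix.one_apply]
        have := hM2pos i j
        split <;> linarith
      · intro i
        rw [Matrix.add_apply, Matrix.one_apply, if_pos rfl]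
        linarith [hM2pos i i]
      · intro S h1 h2
        obtain ⟨i, hi⟩ := h1
        obtain ⟨j, hj⟩ := Set.nonempty_compl.mpr h2
        have hne : i ≠ j := fun h => hj (h ▸ hi)
        refine ⟨i, hi, j, hj, ?_⟩
        have hval : (1 + M2) i j = M2 i j := by
          rw [Matrix.add_apply, Matrix.one_apply, if_neg hne, zero_add]
        rw [hval]
        exact (hM2pos i j).ne'
    obtain ⟨r2, ψ, hψpos, hψ⟩ := R0Aux.perron_aux hm (fun i j => (hM2pos i j).le) hQ2
    -- pairing
    have hψu : 0 < ψ ⬝ᵥ u :=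
      Finset.sum_pos (fun i _ => mul_pos (hψpos i) (hupos i)) Finset.univ_nonempty
    have hVu : ∀ i, 0 < V⁻¹.mulVec u i := by
      intro i
      apply Finset.sum_pos (fun k _ => mul_pos (hVinv i k) (hupos k)) Finset.univ_nonempty
    have hψVu : 0 < ψ ⬝ᵥ V⁻¹.mulVec u :=
      Finset.sum_pos (fun i _ => mul_pos (hψpos i) (hVu i)) Finset.univ_nonempty
    have hdot1 : ψ ⬝ᵥ ((V⁻¹ * Matrix.diagonal β).mulVec u) = r2 * (ψ ⬝ᵥ u) := by
      rw [dotProduct_mulVec, ← Matrix.mulVec_transpose, ← hM2def, hψ]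
      rw [smul_dotProduct, smul_eq_mul]
    have hdot2 : ψ ⬝ᵥ ((V⁻¹ * Matrix.diagonal β).mulVec u)
        = ψ ⬝ᵥ u + s * (ψ ⬝ᵥ V⁻¹.mulVec u) := by
      rw [hBu, dotProduct_add, dotProduct_smul, smul_eq_mul]
    have hr2 : 1 < r2 := by
      have h1 : r2 * (ψ ⬝ᵥ u) = ψ ⬝ᵥ u + s * (ψ ⬝ᵥ V⁻¹.mulVec u) := by
        rw [← hdot1, hdot2]
      nlinarith [mul_pos hspos hψVu]
    -- transfer to the goal matrix
    set φ : Fin (n+1) → ℝ := (V⁻¹)ᵀ.mulVec ψ with hφdef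
    have hφpos : ∀ i, 0 < φ i := by
      intro i
      apply Finset.sum_pos (fun k _ => mul_pos (by
        rw [Matrix.transpose_apply]; exact hVinv k i) (hψpos k)) Finset.univ_nonempty
    have hφne : φ ≠ 0 := by
      intro hcon
      have := hφpos ⟨0, hm⟩
      rw [hcon] at this
      simp at this
    have hGφ : (Matrix.diagonal β * V⁻¹)ᵀ.mulVec φ = r2 • φ := by
      rw [Matrix.transpose_mul, Matrix.diagonal_transpose, hφdef,
        Matrix.mulVec_mulVec, mul_assoc, ← Matrix.mulVec_mulVec]
      have hM2' : Matrix.diagonal β * (V⁻¹)ᵀ = M2 := by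
        rw [hM2def, Matrix.transpose_mul, Matrix.diagonal_transpose]
      rw [hM2', hψ, Matrix.mulVec_smul]
    have hdetT : (r2 • (1 : Matrix (Fin (n+1)) (Fin (n+1)) ℝ)
        - (Matrix.diagonal β * V⁻¹)ᵀ).det = 0 := by
      rw [← Matrix.exists_mulVec_eq_zero_iff]
      refine ⟨φ, hφne, ?_⟩
      rw [Matrix.sub_mulVec, Matrix.smul_mulVec, Matrix.one_mulVec, hGφ, sub_self]
    have hdet : (r2 • (1 : Matrix (Fin (n+1)) (Fin (n+1)) ℝ)
        - Matrix.diagonal β * V⁻¹).det = 0 := by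
      rw [← Matrix.det_transpose, Matrix.transpose_sub, Matrix.transpose_smul,
        Matrix.transpose_one]
      exact hdetT
    exact R0Aux.specRad_gt_of_root hr2 hdet
end

section
/- Let n ≥ 2 and let L be an n×n real matrix that is essentially nonnegative (all off-diagonal entries nonnegative), irreducible, and has all column sums equal to zero. Let β_i > 0 and γ_i > 0 for i = 1,…,n with β_i − γ_i ≠ β_j − γ_j for some i ≠ j, and set F = diag(β_1,…,β_n) and D = diag(γ_1,…,γ_n). Then the function d ↦ s(F − D + d·L), where s(A) denotes the spectral bound of A (the maximum of the real parts of the eigenvalues of A), is strictly decreasing on [0,∞). -/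
open Matrix Filter Set Topology

section PFAux
open Polynomial

lemma irreducible_transpose {n : ℕ} {A : Matrix (Fin n) (Fin n) ℝ}
    (h : IsIrreducibleMatrix A) : IsIrreducibleMatrix Aᵀ := by
  intro S hS hSu
  obtain ⟨i, hi, j, hj, hij⟩ := h Sᶜ (Set.nonempty_compl.mpr hSu)
    (fun hc => hS.ne_empty (by simpa [Set.compl_univ_iff] using hc))
  rw [compl_compl] at hj
  exact ⟨j, hj, i, hi, hij⟩

lemma mulVec_pos_pow {n : ℕ} {A : Matrix (Fin n) (Fin n) ℝ}
    (hA : ∀ i j, 0 ≤ A i j) (hirr : IsIrreducibleMatrix A)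
    {x : Fin n → ℝ} (hx : ∀ i, 0 ≤ x i) (hx0 : x ≠ 0) (i : Fin n) :
    0 < (((1 + A) ^ (n - 1)).mulVec x) i := by
  classical
  set N : ℕ → Matrix (Fin n) (Fin n) ℝ := fun k => (1 + A) ^ k with hN
  have hNs : ∀ k, N (k+1) = (1 + A) * N k := fun k => pow_succ' _ _
  have hmv : ∀ (M : Matrix (Fin n) (Fin n) ℝ) (y : Fin n → ℝ) (j : Fin n),
      (M.mulVec y) j = ∑ l, M j l * y l := fun _ _ _ => rfl
  have hone : ∀ (y : Fin n → ℝ) (j : Fin n), ((1 + A).mulVec y) j = y j + (A.mulVec y) j := by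
    intro y j; simp [Matrix.add_mulVec, Matrix.one_mulVec]
  have hnonneg : ∀ k j, 0 ≤ ((N k).mulVec x) j := by
    intro k
    induction k with
    | zero => simpa [hN] using hx
    | succ k ih =>
      intro j
      rw [hNs k, ← Matrix.mulVec_mulVec, hone]
      refine add_nonneg (ih j) ?_
      rw [hmv]
      exact Finset.sum_nonneg fun l _ => mul_nonneg (hA j l) (ih l)
  have hstep : ∀ k j, 0 < ((N k).mulVec x) j → 0 < ((N (k+1)).mulVec x) j := by
    intro k j hj
    rw [hNs k, ← Matrix.mulVec_mulVec, hone]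
    refine add_pos_of_pos_of_nonneg hj ?_
    rw [hmv]
    exact Finset.sum_nonneg fun l _ => mul_nonneg (hA j l) (hnonneg k l)
  set T : ℕ → Finset (Fin n) := fun k => Finset.univ.filter (fun j => 0 < ((N k).mulVec x) j)
  have hT0 : (T 0).Nonempty := by
    obtain ⟨j, hj⟩ := Function.ne_iff.mp hx0
    refine ⟨j, ?_⟩
    simp only [T, Finset.mem_filter, Finset.mem_univ, true_and]
    have h0 : (N 0).mulVec x = x := by simp [hN]
    rw [h0]
    exact lt_of_le_of_ne (hx j) (Ne.symm (by simpa using hj))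
  have hmono : ∀ k, T k ⊆ T (k+1) := by
    intro k j hj
    simp only [T, Finset.mem_filter, Finset.mem_univ, true_and] at hj ⊢
    exact hstep k j hj
  have hTne : ∀ k, (T k).Nonempty := by
    intro k
    induction k with
    | zero => exact hT0
    | succ k ih => exact ih.mono (hmono k)
  have hgrow : ∀ k, T k ≠ Finset.univ → T k ⊂ T (k+1) := by
    intro k hku
    have hS : ((T k : Set (Fin n))ᶜ).Nonempty := by
      rw [Set.nonempty_compl]
      intro h
      exact hku (Finset.coe_injective (by simpa using h))
    have hSu : ((T k : Set (Fin n))ᶜ) ≠ Set.univ := by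
      intro h
      obtain ⟨j, hj⟩ := hTne k
      have : (j : Fin n) ∈ ((T k : Set (Fin n))ᶜ) := h ▸ Set.mem_univ j
      exact this (by simpa using hj)
    obtain ⟨a, ha, b, hb, hab⟩ := hirr _ hS hSu
    rw [compl_compl] at hb
    have hbk : b ∈ T k := by simpa using hb
    have hak : a ∉ T k := by simpa using ha
    refine ⟨hmono k, fun hsub => hak (hsub ?_)⟩
    simp only [T, Finset.mem_filter, Finset.mem_univ, true_and]
    rw [hNs k, ← Matrix.mulVec_mulVec, hone]
    have hyb : 0 < ((N k).mulVec x) b := by simpa [T] using hbk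
    have hAab : 0 < A a b := lt_of_le_of_ne (hA a b) (Ne.symm hab)
    refine add_pos_of_nonneg_of_pos (hnonneg k a) ?_
    rw [hmv]
    calc (0:ℝ) < A a b * ((N k).mulVec x) b := mul_pos hAab hyb
      _ ≤ ∑ l, A a l * ((N k).mulVec x) l := Finset.single_le_sum
          (fun l _ => mul_nonneg (hA a l) (hnonneg k l)) (Finset.mem_univ b)
  have hcard : ∀ k, T k = Finset.univ ∨ k + 1 ≤ (T k).card := by
    intro k
    induction k with
    | zero => exact Or.inr (Finset.Nonempty.card_pos hT0)
    | succ k ih =>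
      by_cases hku : T k = Finset.univ
      · exact Or.inl (Finset.univ_subset_iff.mp (hku ▸ hmono k))
      · rcases ih with h | h
        · exact absurd h hku
        · by_cases hk1 : T (k+1) = Finset.univ
          · exact Or.inl hk1
          · right
            have := Finset.card_lt_card (hgrow k hku)
            omega
  have hfin : T (n-1) = Finset.univ := by
    rcases hcard (n-1) with h | h
    · exact h
    · apply Finset.eq_univ_of_card
      have hle : (T (n-1)).card ≤ n := by
        simpa using Finset.card_le_card (Finset.subset_univ (T (n-1)))
      have hn : 0 < n := Fin.pos i
      rw [Fintype.card_fin]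
      omega
  have : i ∈ T (n-1) := hfin ▸ Finset.mem_univ i
  simpa [T] using this

lemma exists_perron_right {n : ℕ} (hn : 0 < n) {A : Matrix (Fin n) (Fin n) ℝ}
    (hA : ∀ i j, 0 ≤ A i j) (hirr : IsIrreducibleMatrix A) :
    ∃ (r : ℝ) (v : Fin n → ℝ), (∀ i, 0 < v i) ∧ A.mulVec v = r • v := by
  classical
  haveI : Nonempty (Fin n) := ⟨⟨0, hn⟩⟩
  set N : Matrix (Fin n) (Fin n) ℝ := (1 + A) ^ (n - 1) with hNdef
  have hNpos : ∀ (x : Fin n → ℝ), (∀ i, 0 ≤ x i) → x ≠ 0 → ∀ i, 0 < (N.mulVec x) i :=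
    fun x hx hx0 i => mulVec_pos_pow hA hirr hx hx0 i
  have hcontM : ∀ (M : Matrix (Fin n) (Fin n) ℝ), Continuous (fun y : Fin n → ℝ => M.mulVec y) := by
    intro M
    refine continuous_pi fun i => ?_
    have h : (fun y : Fin n → ℝ => (M.mulVec y) i) = fun y => ∑ j, M i j * y j := rfl
    rw [h]
    exact continuous_finset_sum _ fun j _ => continuous_const.mul (continuous_apply j)
  set K := stdSimplex ℝ (Fin n)
  have hKc : IsCompact K := isCompact_stdSimplex ℝ (Fin n)
  have hKne : K.Nonempty := ⟨Pi.single ⟨0, hn⟩ 1, single_mem_stdSimplex ℝ _⟩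
  have hKmem : ∀ y ∈ K, (∀ i, 0 ≤ y i) ∧ y ≠ 0 := by
    intro y hy
    obtain ⟨h1, h2⟩ := hy
    refine ⟨h1, fun h0 => ?_⟩
    rw [h0] at h2
    simp at h2
  set g : (Fin n → ℝ) → ℝ := fun y =>
    Finset.univ.inf' Finset.univ_nonempty
      (fun i => (A.mulVec (N.mulVec y)) i / (N.mulVec y) i) with hgdef
  have hgcont : ContinuousOn g K := by
    intro y hy
    refine ContinuousAt.continuousWithinAt ?_
    refine ContinuousAt.finset_inf'_apply Finset.univ_nonempty ?_
    intro i _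
    refine ContinuousAt.div ?_ ?_ ?_
    · exact (((continuous_apply i).comp (hcontM A)).comp (hcontM N)).continuousAt
    · exact ((continuous_apply i).comp (hcontM N)).continuousAt
    · exact (hNpos y (hKmem y hy).1 (hKmem y hy).2 i).ne'
  obtain ⟨y₀, hy₀K, hmax'⟩ := hKc.exists_isMaxOn hKne hgcont
  set v : Fin n → ℝ := N.mulVec y₀ with hvdef
  have hv : ∀ i, 0 < v i := hNpos y₀ (hKmem y₀ hy₀K).1 (hKmem y₀ hy₀K).2
  set r : ℝ := g y₀ with hrdef
  have hineq : ∀ i, r * v i ≤ (A.mulVec v) i := by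
    intro i
    have := Finset.inf'_le (b := i)
      (f := fun i => (A.mulVec (N.mulVec y₀)) i / (N.mulVec y₀) i) (Finset.mem_univ i)
    have h3 : r ≤ (A.mulVec v) i / v i := this
    calc r * v i ≤ ((A.mulVec v) i / v i) * v i := by
          exact mul_le_mul_of_nonneg_right h3 (hv i).le
      _ = (A.mulVec v) i := div_mul_cancel₀ _ (hv i).ne'
  refine ⟨r, v, hv, ?_⟩
  by_contra hne
  -- w = Av - rv is nonneg, nonzero
  set w : Fin n → ℝ := A.mulVec v - r • v with hwdef
  have hw0 : ∀ i, 0 ≤ w i := fun i => by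
    simp only [hwdef, Pi.sub_apply, Pi.smul_apply, smul_eq_mul, sub_nonneg]; exact hineq i
  have hwne : w ≠ 0 := by
    intro h
    apply hne
    have := sub_eq_zero.mp h
    exact this
  have hcomm : N * A = A * N := by
    have h1 : Commute (1 + A) A := (Commute.one_left A).add_left (Commute.refl A)
    exact (h1.pow_left (n - 1)).eq
  set v' : Fin n → ℝ := N.mulVec v with hv'def
  have hv' : ∀ i, 0 < v' i := hNpos v (fun i => (hv i).le) (fun h => (hv ⟨0, hn⟩).ne' (by rw [h]; rfl)) 
  have hstrict : ∀ i, r * v' i < (A.mulVec v') i := by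
    intro i
    have hz : 0 < (N.mulVec w) i := hNpos w hw0 hwne i
    have : N.mulVec w = A.mulVec v' - r • v' := by
      rw [hwdef, Matrix.mulVec_sub, Matrix.mulVec_smul, hv'def, Matrix.mulVec_mulVec, hcomm,
        ← Matrix.mulVec_mulVec]
    rw [this] at hz
    simp only [Pi.sub_apply, Pi.smul_apply, smul_eq_mul, sub_pos] at hz
    exact hz
  -- normalize v to get a contradiction
  set c : ℝ := (∑ j, v j)⁻¹ with hcdef
  have hsum : 0 < ∑ j, v j := Finset.sum_pos (fun j _ => hv j) Finset.univ_nonempty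
  have hc : 0 < c := inv_pos.mpr hsum
  set y₁ : Fin n → ℝ := c • v with hy₁def
  have hy₁K : y₁ ∈ K := by
    constructor
    · intro i; exact mul_nonneg hc.le (hv i).le
    · simp only [hy₁def, Pi.smul_apply, smul_eq_mul, ← Finset.mul_sum, hcdef]
      exact inv_mul_cancel₀ hsum.ne'
  have hgy₁ : r < g y₁ := by
    rw [hgdef]
    rw [Finset.lt_inf'_iff]
    intro i _
    have h1 : N.mulVec y₁ = c • v' := by rw [hy₁def, Matrix.mulVec_smul, hv'def]
    have h2 : A.mulVec (N.mulVec y₁) = c • (A.mulVec v') := by rw [h1, Matrix.mulVec_smul]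
    rw [h2, h1]
    simp only [Pi.smul_apply, smul_eq_mul]
    rw [mul_div_mul_left _ _ hc.ne']
    rw [lt_div_iff₀ (hv' i)]
    exact hstrict i
  exact absurd (hmax' hy₁K) (not_le.mpr hgy₁)

lemma isRoot_charpoly_iff {n : ℕ} (M : Matrix (Fin n) (Fin n) ℂ) (μ : ℂ) :
    (M.charpoly).IsRoot μ ↔ (μ • (1 : Matrix (Fin n) (Fin n) ℂ) - M).det = 0 := by
  have h : (M.charpoly).eval μ = (μ • (1 : Matrix (Fin n) (Fin n) ℂ) - M).det := by
    rw [Matrix.charpoly, show (M.charmatrix).det.eval μ = (evalRingHom μ) (M.charmatrix).det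
      from rfl, RingHom.map_det]
    congr 1
    ext i j
    by_cases hij : i = j
    · subst hij; simp [Matrix.charmatrix_apply_eq]
    · simp [Matrix.charmatrix_apply_ne _ _ _ hij, Matrix.one_apply_ne hij]
  rw [Polynomial.IsRoot, h]

lemma isRoot_charpoly_iff_eigen {n : ℕ} (M : Matrix (Fin n) (Fin n) ℂ) (μ : ℂ) :
    (M.charpoly).IsRoot μ ↔ ∃ x : Fin n → ℂ, x ≠ 0 ∧ M.mulVec x = μ • x := by
  rw [isRoot_charpoly_iff, ← Matrix.exists_mulVec_eq_zero_iff]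
  constructor
  · rintro ⟨x, hx, h0⟩
    refine ⟨x, hx, ?_⟩
    rw [Matrix.sub_mulVec, Matrix.smul_mulVec, Matrix.one_mulVec, sub_eq_zero] at h0
    exact h0.symm
  · rintro ⟨x, hx, h0⟩
    refine ⟨x, hx, ?_⟩
    rw [Matrix.sub_mulVec, Matrix.smul_mulVec, Matrix.one_mulVec, sub_eq_zero, h0]

lemma spectralBound_transpose {n : ℕ} (B : Matrix (Fin n) (Fin n) ℝ) :
    spectralBound Bᵀ = spectralBound B := by
  unfold spectralBound
  congr 1
  ext x
  have key : ∀ μ : ℂ, ((Bᵀ.map Complex.ofReal).charpoly).IsRoot μ ↔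
      ((B.map Complex.ofReal).charpoly).IsRoot μ := by
    intro μ
    rw [isRoot_charpoly_iff, isRoot_charpoly_iff]
    rw [Matrix.transpose_map]
    have : μ • (1 : Matrix (Fin n) (Fin n) ℂ) - (B.map Complex.ofReal)ᵀ
        = (μ • (1 : Matrix (Fin n) (Fin n) ℂ) - B.map Complex.ofReal)ᵀ := by
      rw [Matrix.transpose_sub, Matrix.transpose_smul, Matrix.transpose_one]
    rw [this, Matrix.det_transpose]
  constructor
  · rintro ⟨μ, h1, h2⟩; exact ⟨μ, (key μ).mp h1, h2⟩
  · rintro ⟨μ, h1, h2⟩; exact ⟨μ, (key μ).mpr h1, h2⟩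

lemma perron_spectralBound {n : ℕ} (hn : 0 < n) (B : Matrix (Fin n) (Fin n) ℝ)
    (hess : ∀ i j, i ≠ j → 0 ≤ B i j) (hirr : IsIrreducibleMatrix B) :
    ∃ v u : Fin n → ℝ, (∀ i, 0 < v i) ∧ (∀ i, 0 < u i) ∧
      B.mulVec v = spectralBound B • v ∧ Bᵀ.mulVec u = spectralBound B • u := by
  classical
  haveI : Nonempty (Fin n) := ⟨⟨0, hn⟩⟩
  set c : ℝ := 1 + ∑ i, |B i i| with hcdef
  set A : Matrix (Fin n) (Fin n) ℝ := B + c • 1 with hAdef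
  have hAentry : ∀ i j, A i j = B i j + c * (1 : Matrix (Fin n) (Fin n) ℝ) i j := by
    intro i j; simp [hAdef]
  have hA : ∀ i j, 0 ≤ A i j := by
    intro i j
    rw [hAentry]
    by_cases hij : i = j
    · subst hij
      rw [Matrix.one_apply_eq, mul_one, hcdef]
      have h1 : |B i i| ≤ ∑ k, |B k k| :=
        Finset.single_le_sum (fun k _ => abs_nonneg (B k k)) (Finset.mem_univ i)
      have h2 : -B i i ≤ |B i i| := neg_le_abs _
      linarith
    · rw [Matrix.one_apply_ne hij, mul_zero, add_zero]
      exact hess i j hij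
  have hoffdiag : ∀ i j, i ≠ j → A i j = B i j := by
    intro i j hij
    rw [hAentry, Matrix.one_apply_ne hij, mul_zero, add_zero]
  have hirrA : IsIrreducibleMatrix A := by
    intro S hS hSu
    obtain ⟨i, hi, j, hj, hij⟩ := hirr S hS hSu
    have hne : i ≠ j := fun h => hj (h ▸ hi)
    exact ⟨i, hi, j, hj, by rw [hoffdiag i j hne]; exact hij⟩
  obtain ⟨ρ, v, hv, hAv⟩ := exists_perron_right hn hA hirrA
  obtain ⟨ρ', u, hu, hATu⟩ := exists_perron_right hn (A := Aᵀ)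
    (fun i j => hA j i) (irreducible_transpose hirrA)
  -- ρ = ρ'
  have hdotuv : 0 < u ⬝ᵥ v := Finset.sum_pos (fun i _ => mul_pos (hu i) (hv i)) Finset.univ_nonempty
  have hrr : ρ = ρ' := by
    have h1 : u ⬝ᵥ (A.mulVec v) = ρ * (u ⬝ᵥ v) := by rw [hAv, dotProduct_smul]; rfl
    have h2 : u ⬝ᵥ (A.mulVec v) = ρ' * (u ⬝ᵥ v) := by
      rw [dotProduct_mulVec, ← Matrix.mulVec_transpose, hATu, smul_dotProduct]; rfl
    have := h1.symm.trans h2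
    exact mul_right_cancel₀ hdotuv.ne' this
  -- eigen equations for B
  have hBv : B.mulVec v = (ρ - c) • v := by
    have : A.mulVec v = B.mulVec v + c • v := by
      rw [hAdef, Matrix.add_mulVec, Matrix.smul_mulVec, Matrix.one_mulVec]
    rw [this] at hAv
    funext i
    have := congrFun hAv i
    simp only [Pi.add_apply, Pi.smul_apply, smul_eq_mul] at this ⊢
    linarith
  have hATu' : Aᵀ.mulVec u = ρ • u := by rw [hrr]; exact hATu
  have hBTu : Bᵀ.mulVec u = (ρ - c) • u := by
    have hAT2 : Aᵀ = Bᵀ + c • 1 := by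
      rw [hAdef, Matrix.transpose_add, Matrix.transpose_smul, Matrix.transpose_one]
    have hexp : Aᵀ.mulVec u = Bᵀ.mulVec u + c • u := by
      rw [hAT2, Matrix.add_mulVec, Matrix.smul_mulVec, Matrix.one_mulVec]
    rw [hexp] at hATu'
    funext i
    have := congrFun hATu' i
    simp only [Pi.add_apply, Pi.smul_apply, smul_eq_mul] at this ⊢
    linarith
  -- spectralBound B = ρ - c
  set P : Matrix (Fin n) (Fin n) ℂ := B.map Complex.ofReal with hPdef
  set S : Set ℝ := {x : ℝ | ∃ μ : ℂ, (P.charpoly).IsRoot μ ∧ μ.re = x} with hSdef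
  have hmem : (ρ - c) ∈ S := by
    refine ⟨((ρ - c : ℝ) : ℂ), ?_, by simp⟩
    rw [isRoot_charpoly_iff_eigen]
    refine ⟨fun i => ((v i : ℝ) : ℂ), ?_, ?_⟩
    · intro h
      have := congrFun h ⟨0, hn⟩
      simp only [Pi.zero_apply, Complex.ofReal_eq_zero] at this
      exact (hv ⟨0, hn⟩).ne' this
    · funext i
      have hre := congrFun hBv i
      have hre2 : ∑ j, B i j * v j = (ρ - c) * v i := by
        simpa [Matrix.mulVec, dotProduct] using hre
      have : ∑ j, ((B i j : ℝ) : ℂ) * ((v j : ℝ) : ℂ) = ((ρ - c : ℝ) : ℂ) * ((v i : ℝ) : ℂ) := by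
        push_cast
        exact_mod_cast congrArg (Complex.ofReal) hre2
      simpa [Matrix.mulVec, dotProduct, hPdef, Matrix.map_apply] using this
  have hbound : ∀ x ∈ S, x ≤ ρ - c := by
    rintro x ⟨μ, hroot, hre⟩
    obtain ⟨z, hz0, hz⟩ := (isRoot_charpoly_iff_eigen P μ).mp hroot
    set y : Fin n → ℝ := fun i => ‖z i‖ with hydef
    have hy0 : ∀ i, 0 ≤ y i := fun i => norm_nonneg _
    have hyne : ∃ i, 0 < y i := by
      by_contra h
      push_neg at h
      apply hz0
      funext i
      exact norm_eq_zero.mp (le_antisymm (h i) (hy0 i))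
    -- pointwise: |μ + c| * y i ≤ (A *ᵥ y) i
    have hkey : ∀ i, ‖μ + c‖ * y i ≤ (A.mulVec y) i := by
      intro i
      have hPz : ∑ j, ((B i j : ℝ) : ℂ) * z j = μ * z i := by
        have := congrFun hz i
        simpa [Matrix.mulVec, dotProduct, hPdef, Matrix.map_apply] using this
      have hAz : ∑ j, ((A i j : ℝ) : ℂ) * z j = (μ + c) * z i := by
        have hsplit : ∀ j, ((A i j : ℝ) : ℂ) = ((B i j : ℝ) : ℂ)
            + (c : ℂ) * (((1 : Matrix (Fin n) (Fin n) ℝ) i j : ℝ) : ℂ) := by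
          intro j; rw [hAentry]; push_cast; ring
        calc ∑ j, ((A i j : ℝ) : ℂ) * z j
            = ∑ j, (((B i j : ℝ) : ℂ) * z j
              + (c : ℂ) * ((((1 : Matrix (Fin n) (Fin n) ℝ) i j : ℝ) : ℂ) * z j)) := by
              refine Finset.sum_congr rfl fun j _ => ?_
              rw [hsplit j]; ring
          _ = (∑ j, ((B i j : ℝ) : ℂ) * z j)
              + (c : ℂ) * ∑ j, ((((1 : Matrix (Fin n) (Fin n) ℝ) i j : ℝ) : ℂ) * z j) := by
              rw [Finset.sum_add_distrib, Finset.mul_sum]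
          _ = μ * z i + (c : ℂ) * z i := by
              rw [hPz]
              congr 2
              have : ∀ j, ((((1 : Matrix (Fin n) (Fin n) ℝ) i j : ℝ) : ℂ) * z j)
                  = if j = i then z i else 0 := by
                intro j
                by_cases hij : i = j
                · subst hij; simp [Matrix.one_apply_eq]
                · simp [Matrix.one_apply_ne hij, Ne.symm hij]
              rw [Finset.sum_congr rfl fun j _ => this j, Finset.sum_ite_eq']
              simp
          _ = (μ + c) * z i := by ring
      calc ‖μ + c‖ * y i = ‖(μ + c) * z i‖ := by
            rw [norm_mul]
        _ = ‖∑ j, ((A i j : ℝ) : ℂ) * z j‖ := by rw [hAz]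
        _ ≤ ∑ j, ‖((A i j : ℝ) : ℂ) * z j‖ := norm_sum_le _ _
        _ = ∑ j, A i j * y j := by
            refine Finset.sum_congr rfl fun j _ => ?_
            rw [norm_mul, Complex.norm_real, Real.norm_eq_abs, abs_of_nonneg (hA i j)]
        _ = (A.mulVec y) i := rfl
    -- pair with u
    have hpair : ‖μ + c‖ * (u ⬝ᵥ y) ≤ ρ * (u ⬝ᵥ y) := by
      have h1 : u ⬝ᵥ (A.mulVec y) = ρ * (u ⬝ᵥ y) := by
        rw [dotProduct_mulVec, ← Matrix.mulVec_transpose, hATu', smul_dotProduct]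
        rfl
      calc ‖μ + c‖ * (u ⬝ᵥ y) = ∑ i, u i * (‖μ + c‖ * y i) := by
            rw [dotProduct, Finset.mul_sum]
            refine Finset.sum_congr rfl fun i _ => by ring
        _ ≤ ∑ i, u i * (A.mulVec y) i := by
            refine Finset.sum_le_sum fun i _ => mul_le_mul_of_nonneg_left (hkey i) (hu i).le
        _ = u ⬝ᵥ (A.mulVec y) := rfl
        _ = ρ * (u ⬝ᵥ y) := h1
    have hduy : 0 < u ⬝ᵥ y := by
      obtain ⟨i, hi⟩ := hyne
      refine Finset.sum_pos' (fun j _ => mul_nonneg (hu j).le (hy0 j)) ⟨i, Finset.mem_univ i,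
        mul_pos (hu i) hi⟩
    have habs : ‖μ + c‖ ≤ ρ := le_of_mul_le_mul_right hpair hduy
    have : μ.re + c ≤ ‖μ + c‖ := by
      have := Complex.re_le_norm (μ + c)
      simpa using this
    linarith [hre ▸ (le_refl x)]
  have hfin : S.Finite := by
    have h1 : ({μ : ℂ | (P.charpoly).IsRoot μ}).Finite :=
      Polynomial.finite_setOf_isRoot (Matrix.charpoly_monic P).ne_zero
    have h2 : S = Complex.re '' {μ : ℂ | (P.charpoly).IsRoot μ} := by
      ext x
      constructor
      · rintro ⟨μ, h, hx⟩; exact ⟨μ, h, hx⟩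
      · rintro ⟨μ, h, hx⟩; exact ⟨μ, h, hx⟩
    rw [h2]
    exact h1.image _
  have hsb : spectralBound B = ρ - c := by
    rw [spectralBound, ← hPdef, ← hSdef]
    exact le_antisymm (csSup_le ⟨_, hmem⟩ hbound) (le_csSup hfin.bddAbove hmem)
  exact ⟨v, u, hv, hu, hsb ▸ hBv, hsb ▸ hBTu⟩

lemma spectralBound_diagonal {n : ℕ} (w : Fin n → ℝ) {m : ℝ}
    (hub : ∀ i, w i ≤ m) (hmem : ∃ i, w i = m) :
    spectralBound (Matrix.diagonal w) = m := by
  classical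
  have hmap : (Matrix.diagonal w).map Complex.ofReal
      = Matrix.diagonal (fun i => ((w i : ℝ) : ℂ)) := by
    rw [Matrix.diagonal_map (by simp)]
  have hroot : ∀ μ : ℂ, (((Matrix.diagonal w).map Complex.ofReal).charpoly).IsRoot μ
      ↔ ∃ i, μ = ((w i : ℝ) : ℂ) := by
    intro μ
    rw [isRoot_charpoly_iff, hmap]
    have h1 : μ • (1 : Matrix (Fin n) (Fin n) ℂ) - Matrix.diagonal (fun i => ((w i : ℝ) : ℂ))
        = Matrix.diagonal (fun i => μ - ((w i : ℝ) : ℂ)) := by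
      ext i j
      by_cases hij : i = j
      · subst hij
        simp [Matrix.one_apply_eq]
      · simp [Matrix.one_apply_ne hij, Matrix.diagonal_apply_ne _ hij]
    rw [h1, Matrix.det_diagonal]
    rw [Finset.prod_eq_zero_iff]
    constructor
    · rintro ⟨i, _, hi⟩; exact ⟨i, by linear_combination hi⟩
    · rintro ⟨i, hi⟩; exact ⟨i, Finset.mem_univ i, by rw [hi]; ring⟩
  have hS : {x : ℝ | ∃ μ : ℂ, (((Matrix.diagonal w).map Complex.ofReal).charpoly).IsRoot μ
      ∧ μ.re = x} = {x : ℝ | ∃ i, w i = x} := by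
    ext x
    constructor
    · rintro ⟨μ, hμ, hx⟩
      obtain ⟨i, hi⟩ := (hroot μ).mp hμ
      exact ⟨i, by rw [← hx, hi, Complex.ofReal_re]⟩
    · rintro ⟨i, hi⟩
      exact ⟨((w i : ℝ) : ℂ), (hroot _).mpr ⟨i, rfl⟩, by rw [Complex.ofReal_re, hi]⟩
  rw [spectralBound, hS]
  apply le_antisymm
  · apply csSup_le
    · obtain ⟨i, hi⟩ := hmem; exact ⟨m, i, hi⟩
    · rintro x ⟨i, hi⟩; rw [← hi]; exact hub i
  · obtain ⟨i, hi⟩ := hmem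
    refine le_csSup ⟨m, ?_⟩ ⟨i, hi⟩
    rintro x ⟨j, hj⟩
    rw [← hj]; exact hub j

end PFAux

/-- For an essentially nonnegative, irreducible `L` with zero column sums and
positive diagonal matrices `F = diag(β)`, `D = diag(γ)` with `β_i − γ_i` not all equal,
the spectral bound `d ↦ s(F − D + d·L)` is strictly decreasing on `[0,∞)`. -/
theorem spectralBound_FV_strictAnti {n : ℕ} (hn : 2 ≤ n)
    (L : Matrix (Fin n) (Fin n) ℝ)
    (hess : ∀ i j, i ≠ j → 0 ≤ L i j)
    (hirr : IsIrreducibleMatrix L)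
    (hcol : ∀ j, ∑ i, L i j = 0)
    (β γ : Fin n → ℝ) (hβ : ∀ i, 0 < β i) (hγ : ∀ i, 0 < γ i)
    (hhet : ∃ i j, i ≠ j ∧ β i - γ i ≠ β j - γ j) :
    StrictAntiOn
      (fun d : ℝ => spectralBound (Matrix.diagonal β - Matrix.diagonal γ + d • L))
      (Set.Ici 0) := by
  intro d1 hd1 d2 hd2 hlt
  simp only [Set.mem_Ici] at hd1 hd2
  have hn0 : 0 < n := by omega
  haveI : Nonempty (Fin n) := ⟨⟨0, hn0⟩⟩
  set δ : Fin n → ℝ := fun i => β i - γ i with hδdef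
  have hdiag : Matrix.diagonal β - Matrix.diagonal γ = Matrix.diagonal δ := by
    rw [← Matrix.diagonal_sub]
  set M : ℝ → Matrix (Fin n) (Fin n) ℝ := fun d => Matrix.diagonal δ + d • L with hMdef
  have hgoalM : ∀ d : ℝ, Matrix.diagonal β - Matrix.diagonal γ + d • L = M d := by
    intro d; rw [hdiag]
  show spectralBound (Matrix.diagonal β - Matrix.diagonal γ + d2 • L)
      < spectralBound (Matrix.diagonal β - Matrix.diagonal γ + d1 • L)
  rw [hgoalM d2, hgoalM d1]
  have hMT : ∀ d : ℝ, (M d)ᵀ = Matrix.diagonal δ + d • Lᵀ := by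
    intro d
    rw [hMdef]
    rw [Matrix.transpose_add, Matrix.transpose_smul, Matrix.diagonal_transpose]
  have hd2pos : 0 < d2 := lt_of_le_of_lt hd1 hlt
  have hMent : ∀ (d : ℝ) i j, i ≠ j → (M d) i j = d * L i j := by
    intro d i j hne
    rw [hMdef]
    simp [Matrix.diagonal_apply_ne _ hne]
  have hirrM : ∀ d : ℝ, d ≠ 0 → IsIrreducibleMatrix (M d) := by
    intro d hd S hS hSu
    obtain ⟨i, hi, j, hj, hij⟩ := hirr S hS hSu
    have hne : i ≠ j := fun h => hj (h ▸ hi)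
    refine ⟨i, hi, j, hj, ?_⟩
    rw [hMent d i j hne]
    exact mul_ne_zero hd hij
  have hessM : ∀ d : ℝ, 0 ≤ d → ∀ i j, i ≠ j → 0 ≤ (M d) i j := by
    intro d hd i j hne
    rw [hMent d i j hne]
    exact mul_nonneg hd (hess i j hne)
  have hessMT : ∀ d : ℝ, 0 ≤ d → ∀ i j, i ≠ j → 0 ≤ ((M d)ᵀ) i j := by
    intro d hd i j hne
    exact hessM d hd j i (Ne.symm hne)
  -- componentwise mulVec for (M d)ᵀ
  have hcomp : ∀ (d : ℝ) (x : Fin n → ℝ) (i : Fin n),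
      (((M d)ᵀ).mulVec x) i = δ i * x i + d * (Lᵀ.mulVec x) i := by
    intro d x i
    rw [hMT, Matrix.add_mulVec, Pi.add_apply, Matrix.mulVec_diagonal,
      Matrix.smul_mulVec, Pi.smul_apply, smul_eq_mul]
  -- zero-row-sum rewrite for Lᵀ
  have hLT : ∀ (x : Fin n → ℝ) (i : Fin n), (Lᵀ.mulVec x) i = ∑ j, L j i * (x j - x i) := by
    intro x i
    have h1 : (Lᵀ.mulVec x) i = ∑ j, L j i * x j := by
      simp [Matrix.mulVec, dotProduct, Matrix.transpose_apply]
    have h2 : ∑ j, L j i * (x j - x i) = (∑ j, L j i * x j) - (∑ j, L j i) * x i := by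
      rw [Finset.sum_mul, ← Finset.sum_sub_distrib]
      exact Finset.sum_congr rfl fun j _ => by ring
    rw [h1, h2, hcol i, zero_mul, sub_zero]
  -- Perron for (M d2)ᵀ
  obtain ⟨v, u2, hv, hu2, hveq, -⟩ := perron_spectralBound hn0 ((M d2)ᵀ)
    (hessMT d2 hd2pos.le) (irreducible_transpose (hirrM d2 hd2pos.ne'))
  set s2 : ℝ := spectralBound ((M d2)ᵀ) with hs2def
  have hs2eq : spectralBound (M d2) = s2 := (spectralBound_transpose (M d2)).symm
  have heig : ∀ i, δ i * v i + d2 * (Lᵀ.mulVec v) i = s2 * v i := by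
    intro i
    have h := congrFun hveq i
    rw [hcomp d2 v i] at h
    simpa using h
  have hnc : ∃ a b : Fin n, v a ≠ v b := by
    by_contra h
    push_neg at h
    have hLv : ∀ i, (Lᵀ.mulVec v) i = 0 := by
      intro i
      rw [hLT]
      exact Finset.sum_eq_zero fun j _ => by rw [h j i, sub_self, mul_zero]
    have hδc : ∀ i, δ i = s2 := by
      intro i
      have h2 := heig i
      rw [hLv i, mul_zero, add_zero] at h2
      exact mul_right_cancel₀ (hv i).ne' h2
    obtain ⟨a, b, hab, hne⟩ := hhet
    exact hne (by rw [show β a - γ a = δ a from rfl, show β b - γ b = δ b from rfl, hδc a, hδc b])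
  rw [hs2eq]
  rcases hd1.eq_or_lt with h0 | hd1pos
  · -- case d1 = 0
    subst h0
    have hM0 : M 0 = Matrix.diagonal δ := by rw [hMdef]; simp
    obtain ⟨im, -, hmle⟩ := Finset.exists_max_image Finset.univ δ Finset.univ_nonempty
    have hub : ∀ i, δ i ≤ δ im := fun i => hmle i (Finset.mem_univ i)
    rw [hM0, spectralBound_diagonal δ hub ⟨im, rfl⟩]
    -- show s2 < δ im
    by_contra hcon
    push_neg at hcon
    obtain ⟨iv, -, hvle'⟩ := Finset.exists_max_image Finset.univ v Finset.univ_nonempty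
    have hvle : ∀ j, v j ≤ v iv := fun j => hvle' j (Finset.mem_univ j)
    -- the argmax set of v
    set Sv : Set (Fin n) := {i | v i = v iv} with hSvdef
    have hterm0 : ∀ i ∈ Sv, ∀ j, L j i * (v j - v i) = 0 := by
      intro i hi
      have hvi : v i = v iv := hi
      have htermle : ∀ j ∈ Finset.univ, L j i * (v j - v i) ≤ 0 := by
        intro j _
        by_cases hji : j = i
        · rw [hji, sub_self, mul_zero]
        · exact mul_nonpos_of_nonneg_of_nonpos (hess j i hji) (by rw [hvi]; linarith [hvle j])
      have hLvle : (Lᵀ.mulVec v) i ≤ 0 := by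
        rw [hLT]
        exact Finset.sum_nonpos htermle
      -- δ i = δ im and (Lᵀ v) i = 0
      have h2 := heig i
      have hδile : δ i ≤ δ im := hub i
      have hLvi : (Lᵀ.mulVec v) i = 0 := by
        nlinarith [hv i]
      have hsum0 : ∑ j, L j i * (v j - v i) = 0 := by rw [← hLT]; exact hLvi
      intro j
      have := (Finset.sum_eq_zero_iff_of_nonpos htermle).mp hsum0 j (Finset.mem_univ j)
      exact this
    have hSuniv : Sv = Set.univ := by
      by_contra hne
      obtain ⟨i, hiS, j, hjS, hLij⟩ := (irreducible_transpose hirr) Sv ⟨iv, rfl⟩ hne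
      have hLji : L j i ≠ 0 := hLij
      have := hterm0 i hiS j
      rcases mul_eq_zero.mp this with h | h
      · exact hLji h
      · apply hjS
        have hvj : v j = v i := by linarith [sub_eq_zero.mp h]
        show v j = v iv
        rw [hvj]; exact hiS
    obtain ⟨a, b, hab⟩ := hnc
    have ha : v a = v iv := by
      have h : a ∈ Sv := by rw [hSuniv]; exact Set.mem_univ a
      exact h
    have hb : v b = v iv := by
      have h : b ∈ Sv := by rw [hSuniv]; exact Set.mem_univ b
      exact h
    exact hab (ha.trans hb.symm)
  · -- case 0 < d1
    obtain ⟨u, u', hu, -, hueq, -⟩ := perron_spectralBound hn0 (M d1)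
      (hessM d1 hd1pos.le) (hirrM d1 hd1pos.ne')
    set s1 : ℝ := spectralBound (M d1) with hs1def
    set θ : ℝ := d2 / d1 with hθdef
    have hθ : 1 < θ := (one_lt_div hd1pos).mpr hlt
    have hd2θ : d2 = θ * d1 := by rw [hθdef, div_mul_cancel₀ _ hd1pos.ne']
    set w : Fin n → ℝ := fun i => v i ^ θ with hwdef
    have hw : ∀ i, 0 < w i := fun i => Real.rpow_pos_of_pos (hv i) θ
    have hbern : ∀ t : ℝ, 0 < t → 1 + θ * (t - 1) ≤ t ^ θ := by
      intro t ht
      have h := one_add_mul_self_le_rpow_one_add (by linarith : (-1:ℝ) ≤ t - 1) hθ.le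
      have h1 : 1 + (t - 1) = t := by ring
      rwa [h1] at h
    have hbern' : ∀ t : ℝ, 0 < t → t ≠ 1 → 1 + θ * (t - 1) < t ^ θ := by
      intro t ht ht1
      have h := one_add_mul_self_lt_rpow_one_add (by linarith : (-1:ℝ) ≤ t - 1)
        (by intro h; apply ht1; linarith : t - 1 ≠ 0) hθ
      have h1 : 1 + (t - 1) = t := by ring
      rwa [h1] at h
    -- pairwise inequality (multiplied through by v i)
    have hrel : ∀ i j, v j = (v j / v i) * v i ∧ w j = (v j / v i) ^ θ * w i := by
      intro i j
      constructor
      · rw [div_mul_cancel₀ _ (hv i).ne']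
      · show v j ^ θ = (v j / v i) ^ θ * v i ^ θ
        rw [← Real.mul_rpow (div_pos (hv j) (hv i)).le (hv i).le,
          div_mul_cancel₀ _ (hv i).ne']
    have hpair : ∀ i j, d2 * w i * (v j - v i) ≤ d1 * (w j - w i) * v i := by
      intro i j
      obtain ⟨h1, h2⟩ := hrel i j
      set t : ℝ := v j / v i with htdef
      have ht : 0 < t := div_pos (hv j) (hv i)
      have hb := hbern t ht
      rw [hd2θ]
      rw [h1, h2]
      nlinarith [hw i, hv i, hd1pos, mul_pos (hw i) (hv i), mul_pos hd1pos (mul_pos (hw i) (hv i))]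
    have hpairlt : ∀ i j, v j ≠ v i → d2 * w i * (v j - v i) < d1 * (w j - w i) * v i := by
      intro i j hne
      obtain ⟨h1, h2⟩ := hrel i j
      set t : ℝ := v j / v i with htdef
      have ht : 0 < t := div_pos (hv j) (hv i)
      have ht1 : t ≠ 1 := by
        intro h
        apply hne
        rw [htdef, div_eq_one_iff_eq (hv i).ne'] at h
        exact h
      have hb := hbern' t ht ht1
      rw [hd2θ, h1, h2]
      nlinarith [hw i, hv i, hd1pos, mul_pos (hw i) (hv i), mul_pos hd1pos (mul_pos (hw i) (hv i))]
    -- key: pointwise s2 * w i * v i ≤ ((M d1)ᵀ w)_i * v i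
    have hLsum : ∀ i, d2 * w i * (Lᵀ.mulVec v) i = ∑ j, L j i * (d2 * w i * (v j - v i)) := by
      intro i
      rw [hLT v i, Finset.mul_sum]
      exact Finset.sum_congr rfl fun j _ => by ring
    have hRsum : ∀ i, d1 * (Lᵀ.mulVec w) i * v i = ∑ j, L j i * (d1 * (w j - w i) * v i) := by
      intro i
      rw [hLT w i, Finset.mul_sum, Finset.sum_mul]
      exact Finset.sum_congr rfl fun j _ => by ring
    have hsumle : ∀ i, d2 * w i * (Lᵀ.mulVec v) i ≤ d1 * (Lᵀ.mulVec w) i * v i := by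
      intro i
      rw [hLsum i, hRsum i]
      refine Finset.sum_le_sum fun j _ => ?_
      by_cases hji : j = i
      · subst hji; simp
      · exact mul_le_mul_of_nonneg_left (hpair i j) (hess j i hji)
    -- strict index
    obtain ⟨a, b, hab⟩ := hnc
    have hSvne : ({j | v j = v a} : Set (Fin n)) ≠ Set.univ := by
      intro h
      have hb : b ∈ ({j | v j = v a} : Set (Fin n)) := by rw [h]; exact Set.mem_univ b
      exact hab (show v b = v a from hb).symm
    obtain ⟨i0, hi0, j0, hj0, hLij0⟩ :=
      (irreducible_transpose hirr) {j | v j = v a} ⟨a, rfl⟩ hSvne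
    have hvi0 : v i0 = v a := hi0
    have hvj0 : v j0 ≠ v i0 := fun h => hj0 (show v j0 = v a from h.trans hvi0)
    have hj0i0 : j0 ≠ i0 := fun h => hvj0 (by rw [h])
    have hLj0 : 0 < L j0 i0 :=
      lt_of_le_of_ne (hess j0 i0 hj0i0) (Ne.symm (show L j0 i0 ≠ 0 from hLij0))
    have hstrict : d2 * w i0 * (Lᵀ.mulVec v) i0 < d1 * (Lᵀ.mulVec w) i0 * v i0 := by
      rw [hLsum i0, hRsum i0]
      refine Finset.sum_lt_sum (fun j _ => ?_) ⟨j0, Finset.mem_univ j0,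
        mul_lt_mul_of_pos_left (hpairlt i0 j0 hvj0) hLj0⟩
      by_cases hji : j = i0
      · subst hji; simp
      · exact mul_le_mul_of_nonneg_left (hpair i0 j) (hess j i0 hji)
    -- pointwise comparison
    have hkey : ∀ i, s2 * w i ≤ (((M d1)ᵀ).mulVec w) i := by
      intro i
      have e1 : s2 * w i * v i = δ i * (w i * v i) + d2 * w i * (Lᵀ.mulVec v) i := by
        linear_combination (- w i) * heig i
      have e2 : (((M d1)ᵀ).mulVec w) i * v i
          = δ i * (w i * v i) + d1 * (Lᵀ.mulVec w) i * v i := by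
        rw [hcomp d1 w i]; ring
      have h3 : s2 * w i * v i ≤ (((M d1)ᵀ).mulVec w) i * v i := by
        rw [e1, e2]
        linarith [hsumle i]
      exact le_of_mul_le_mul_right h3 (hv i)
    have hkeylt : s2 * w i0 < (((M d1)ᵀ).mulVec w) i0 := by
      have e1 : s2 * w i0 * v i0 = δ i0 * (w i0 * v i0) + d2 * w i0 * (Lᵀ.mulVec v) i0 := by
        linear_combination (- w i0) * heig i0
      have e2 : (((M d1)ᵀ).mulVec w) i0 * v i0
          = δ i0 * (w i0 * v i0) + d1 * (Lᵀ.mulVec w) i0 * v i0 := by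
        rw [hcomp d1 w i0]; ring
      have h3 : s2 * w i0 * v i0 < (((M d1)ᵀ).mulVec w) i0 * v i0 := by
        rw [e1, e2]
        linarith [hstrict]
      exact lt_of_mul_lt_mul_right h3 (hv i0).le
    -- pair with the right Perron vector u of M d1
    have hdotpos : 0 < u ⬝ᵥ w :=
      Finset.sum_pos (fun i _ => mul_pos (hu i) (hw i)) Finset.univ_nonempty
    have hpairing : u ⬝ᵥ (((M d1)ᵀ).mulVec w) = s1 * (u ⬝ᵥ w) := by
      rw [dotProduct_mulVec, ← Matrix.mulVec_transpose, Matrix.transpose_transpose,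
        hueq, smul_dotProduct]
      rfl
    have hlt2 : s2 * (u ⬝ᵥ w) < u ⬝ᵥ (((M d1)ᵀ).mulVec w) := by
      have h1 : s2 * (u ⬝ᵥ w) = ∑ i, u i * (s2 * w i) := by
        rw [dotProduct, Finset.mul_sum]
        exact Finset.sum_congr rfl fun i _ => by ring
      have h2 : u ⬝ᵥ (((M d1)ᵀ).mulVec w) = ∑ i, u i * ((((M d1)ᵀ).mulVec w) i) := rfl
      rw [h1, h2]
      exact Finset.sum_lt_sum (fun i _ => mul_le_mul_of_nonneg_left (hkey i) (hu i).le)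
        ⟨i0, Finset.mem_univ i0, mul_lt_mul_of_pos_left hkeylt (hu i0)⟩
    rw [hpairing] at hlt2
    exact lt_of_mul_lt_mul_right hlt2 hdotpos.le
end

section
/- Let n ≥ 2 and let L be an n×n real matrix that is essentially nonnegative (all off-diagonal entries nonnegative), irreducible, and has all column sums equal to zero. Let β_i > 0 and γ_i > 0 for i = 1,…,n, set F = diag(β_1,…,β_n) and D = diag(γ_1,…,γ_n), and let C_{ii} denote the diagonal cofactors of L. Then lim_{d→∞} s(F − D + d·L) = (Σ_{i=1}^n (β_i − γ_i)·C_{ii}) / (Σ_{i=1}^n C_{ii}), where s(A) denotes the spectral bound of A (the maximum of the real parts of the eigenvalues of A). -/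
open Matrix Filter Set Topology

/- ### Auxiliary lemmas -/

namespace SpectralBoundAux

variable {n : ℕ}

/-- The componentwise absolute value of a kernel vector of an essentially nonnegative matrix
with zero column sums is again a kernel vector. -/
lemma ker_abs (L : Matrix (Fin (n+1)) (Fin (n+1)) ℝ)
    (hess : ∀ i j, i ≠ j → 0 ≤ L i j) (hcol : ∀ j, ∑ i, L i j = 0)
    (u : Fin (n+1) → ℝ) (hu : L *ᵥ u = 0) : L *ᵥ (fun i => |u i|) = 0 := by
  classical
  set t : ℝ := ∑ i, |L i i| with ht
  have htnn : ∀ i, 0 ≤ t + L i i := by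
    intro i
    have h1 : |L i i| ≤ t := Finset.single_le_sum (f := fun i => |L i i|)
      (fun j _ => abs_nonneg _) (Finset.mem_univ i)
    have := neg_abs_le (L i i)
    linarith
  have hB : ∀ i j, 0 ≤ L i j + t * (if i = j then 1 else 0) := by
    intro i j
    by_cases h : i = j
    · subst h; simpa using by linarith [htnn i]
    · simpa [h] using hess i j h
  have hmv : ∀ (v : Fin (n+1) → ℝ) i, (L *ᵥ v) i = ∑ j, L i j * v j := by
    intro v i; simp [Matrix.mulVec, dotProduct]
  have key : ∀ i, 0 ≤ (L *ᵥ fun k => |u k|) i := by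
    intro i
    have h0 : ∑ j, L i j * u j = 0 := by
      have h0' : (L *ᵥ u) i = 0 := by rw [hu]; rfl
      simpa [hmv] using h0'
    have hBu : ∑ j, (L i j + t * (if i = j then 1 else 0)) * u j = t * u i := by
      simp only [add_mul, Finset.sum_add_distrib, h0, zero_add, mul_assoc, ite_mul, one_mul,
        zero_mul, mul_ite, mul_zero]
      simp [Finset.sum_ite_eq Finset.univ i (fun j => t * u j)]
    have habs : |t * u i| ≤ ∑ j, (L i j + t * (if i = j then 1 else 0)) * |u j| := by
      rw [← hBu]
      refine (Finset.abs_sum_le_sum_abs _ _).trans ?_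
      refine Finset.sum_le_sum fun j _ => ?_
      rw [abs_mul, abs_of_nonneg (hB i j)]
    have hBabs : ∑ j, (L i j + t * (if i = j then 1 else 0)) * |u j|
        = (L *ᵥ fun k => |u k|) i + t * |u i| := by
      simp only [add_mul, Finset.sum_add_distrib, hmv, mul_assoc, ite_mul, one_mul,
        zero_mul, mul_ite, mul_zero]
      simp [Finset.sum_ite_eq Finset.univ i (fun j => t * |u j|)]
    rw [hBabs] at habs
    have := le_abs_self (t * u i)
    have habs2 : |t * u i| = t * |u i| := by
      rw [abs_mul]
      congr 1
      exact abs_of_nonneg (by positivity)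
    linarith [habs2 ▸ habs]
  have hsum : ∑ i, (L *ᵥ fun k => |u k|) i = 0 := by
    simp only [hmv]
    rw [Finset.sum_comm]
    simp only [← Finset.sum_mul, hcol, zero_mul, Finset.sum_const_zero]
  funext i
  have := (Finset.sum_eq_zero_iff_of_nonneg (fun j _ => key j)).mp hsum i (Finset.mem_univ i)
  simpa using this

/-- A nonzero nonnegative kernel vector of an irreducible essentially nonnegative matrix is
strictly positive. -/
lemma ker_pos (L : Matrix (Fin (n+1)) (Fin (n+1)) ℝ)
    (hirr : IsIrreducibleMatrix L) (hess : ∀ i j, i ≠ j → 0 ≤ L i j)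
    (u : Fin (n+1) → ℝ) (hu : L *ᵥ u = 0) (hnn : ∀ i, 0 ≤ u i) (hne : u ≠ 0) :
    ∀ i, 0 < u i := by
  classical
  by_contra hcon
  push_neg at hcon
  obtain ⟨i0, hi0⟩ := hcon
  have hi0 : u i0 = 0 := le_antisymm hi0 (hnn i0)
  set S : Set (Fin (n+1)) := {i | u i = 0} with hS
  have hSne : S.Nonempty := ⟨i0, hi0⟩
  have hSnu : S ≠ Set.univ := by
    intro h
    apply hne
    funext k
    have : k ∈ S := h ▸ Set.mem_univ k
    exact this
  obtain ⟨i, hiS, j, hjS, hLij⟩ := hirr S hSne hSnu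
  have hij : i ≠ j := by
    intro h; subst h; exact hjS hiS
  have hui : u i = 0 := hiS
  have huj : 0 < u j := lt_of_le_of_ne (hnn j) (fun h => hjS (by simpa [hS] using h.symm))
  have h0 : ∑ k, L i k * u k = 0 := by
    have h0' : (L *ᵥ u) i = 0 := by rw [hu]; rfl
    simpa [Matrix.mulVec, dotProduct] using h0'
  have hnn' : ∀ k ∈ Finset.univ, 0 ≤ L i k * u k := by
    intro k _
    by_cases h : i = k
    · subst h; simp [hui]
    · exact mul_nonneg (hess i k h) (hnn k)
  have := (Finset.sum_eq_zero_iff_of_nonneg hnn').mp h0 j (Finset.mem_univ j)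
  exact hLij (by
    rcases mul_eq_zero.mp this with h | h
    · exact h
    · exact absurd h (ne_of_gt huj))

lemma det_eq_zero (L : Matrix (Fin (n+1)) (Fin (n+1)) ℝ)
    (hcol : ∀ j, ∑ i, L i j = 0) : L.det = 0 := by
  have h : Lᵀ.det = 0 := by
    rw [← Matrix.exists_mulVec_eq_zero_iff]
    refine ⟨fun _ => 1, ?_, ?_⟩
    · intro h
      have := congrFun h 0
      simp at this
    · funext i
      simpa [Matrix.mulVec, dotProduct, Matrix.transpose_apply] using hcol i
  rwa [Matrix.det_transpose] at h

/-- Existence of a strictly positive kernel vector, spanning the kernel. -/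
lemma exists_pos_ker (L : Matrix (Fin (n+1)) (Fin (n+1)) ℝ)
    (hess : ∀ i j, i ≠ j → 0 ≤ L i j) (hirr : IsIrreducibleMatrix L)
    (hcol : ∀ j, ∑ i, L i j = 0) :
    ∃ u : Fin (n+1) → ℝ, (∀ i, 0 < u i) ∧ L *ᵥ u = 0 ∧
      (∀ v, L *ᵥ v = 0 → v = (v 0 / u 0) • u) := by
  obtain ⟨u0, hne, hu0⟩ := (Matrix.exists_mulVec_eq_zero_iff).mpr (det_eq_zero L hcol)
  set u : Fin (n+1) → ℝ := fun i => |u0 i| with hu_def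
  have huk : L *ᵥ u = 0 := ker_abs L hess hcol u0 hu0
  have hune : u ≠ 0 := by
    intro h
    apply hne
    funext i
    have := congrFun h i
    simpa [hu_def, abs_eq_zero] using this
  have hupos : ∀ i, 0 < u i := ker_pos L hirr hess u huk (fun i => abs_nonneg _) hune
  refine ⟨u, hupos, huk, ?_⟩
  intro v hv
  set w : Fin (n+1) → ℝ := v - (v 0 / u 0) • u with hw_def
  have hw : L *ᵥ w = 0 := by
    rw [hw_def]
    rw [Matrix.mulVec_sub, Matrix.mulVec_smul, hv, huk]
    simp
  have hw0 : w 0 = 0 := by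
    have h0 : u 0 ≠ 0 := ne_of_gt (hupos 0)
    simp only [hw_def, Pi.sub_apply, Pi.smul_apply, smul_eq_mul]
    field_simp
    ring
  have : w = 0 := by
    by_contra hwne
    have habs : L *ᵥ (fun i => |w i|) = 0 := ker_abs L hess hcol w hw
    have habsne : (fun i => |w i|) ≠ 0 := by
      intro h
      apply hwne
      funext i
      have := congrFun h i
      simpa [abs_eq_zero] using this
    have := ker_pos L hirr hess _ habs (fun i => abs_nonneg _) habsne 0
    rw [hw0] at this
    simp at this
  have : v - (v 0 / u 0) • u = 0 := this
  linear_combination (norm := module) this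

lemma ker_eq_span (L : Matrix (Fin (n+1)) (Fin (n+1)) ℝ)
    (u : Fin (n+1) → ℝ) (hu0 : u ≠ 0) (huk : L *ᵥ u = 0)
    (huniq : ∀ v, L *ᵥ v = 0 → v = (v 0 / u 0) • u) :
    LinearMap.ker L.mulVecLin = Submodule.span ℝ {u} := by
  apply le_antisymm
  · intro v hv
    rw [LinearMap.mem_ker, Matrix.mulVecLin_apply] at hv
    rw [Submodule.mem_span_singleton]
    exact ⟨v 0 / u 0, (huniq v hv).symm⟩
  · rw [Submodule.span_le, Set.singleton_subset_iff]
    rw [SetLike.mem_coe, LinearMap.mem_ker, Matrix.mulVecLin_apply]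
    exact huk

lemma finrank_ker_eq_one (L : Matrix (Fin (n+1)) (Fin (n+1)) ℝ)
    (u : Fin (n+1) → ℝ) (hu0 : u ≠ 0) (huk : L *ᵥ u = 0)
    (huniq : ∀ v, L *ᵥ v = 0 → v = (v 0 / u 0) • u) :
    Module.finrank ℝ (LinearMap.ker L.mulVecLin) = 1 := by
  rw [ker_eq_span L u hu0 huk huniq]
  exact finrank_span_singleton hu0

/-- The sum-of-coordinates functional. -/
noncomputable def sumFun : (Fin (n+1) → ℝ) →ₗ[ℝ] ℝ where
  toFun := fun v => ∑ i, v i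
  map_add' := fun x y => by simp [Finset.sum_add_distrib]
  map_smul' := fun c x => by simp [Finset.mul_sum]

/-- Everything with zero coordinate sum is in the range of `L`. -/
lemma range_eq_sum_zero (L : Matrix (Fin (n+1)) (Fin (n+1)) ℝ)
    (hcol : ∀ j, ∑ i, L i j = 0)
    (u : Fin (n+1) → ℝ) (hu0 : u ≠ 0) (huk : L *ᵥ u = 0)
    (huniq : ∀ v, L *ᵥ v = 0 → v = (v 0 / u 0) • u) :
    ∀ w : Fin (n+1) → ℝ, (∑ i, w i) = 0 → ∃ z, L *ᵥ z = w := by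
  have hker : Module.finrank ℝ (LinearMap.ker L.mulVecLin) = 1 :=
    finrank_ker_eq_one L u hu0 huk huniq
  have hrn := LinearMap.finrank_range_add_finrank_ker L.mulVecLin
  have hpi : Module.finrank ℝ (Fin (n+1) → ℝ) = n + 1 := by simp
  have hrange : Module.finrank ℝ (LinearMap.range L.mulVecLin) = n := by omega
  have hsurj : Function.Surjective (sumFun (n := n)) := by
    intro r
    refine ⟨fun _ => r / (n+1), ?_⟩
    simp only [sumFun, LinearMap.coe_mk, AddHom.coe_mk, Finset.sum_const,
      Finset.card_univ, Fintype.card_fin, nsmul_eq_mul]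
    field_simp
    push_cast; ring
  have hkσ : Module.finrank ℝ (LinearMap.ker (sumFun (n := n))) = n := by
    have := LinearMap.finrank_range_add_finrank_ker (sumFun (n := n))
    rw [LinearMap.range_eq_top.mpr hsurj] at this
    simp only [finrank_top] at this
    have h1 : Module.finrank ℝ ℝ = 1 := Module.finrank_self ℝ
    rw [hpi] at this
    omega
  have hle : LinearMap.range L.mulVecLin ≤ LinearMap.ker (sumFun (n := n)) := by
    rintro _ ⟨z, rfl⟩
    rw [LinearMap.mem_ker]
    simp only [Matrix.mulVecLin_apply, sumFun, LinearMap.coe_mk, AddHom.coe_mk]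
    simp only [Matrix.mulVec, dotProduct]
    rw [Finset.sum_comm]
    simp only [← Finset.sum_mul, hcol, zero_mul, Finset.sum_const_zero]
  have heq : LinearMap.range L.mulVecLin = LinearMap.ker (sumFun (n := n)) := by
    apply Submodule.eq_of_le_of_finrank_le hle
    rw [hrange, hkσ]
  intro w hw
  have : w ∈ LinearMap.range L.mulVecLin := by
    rw [heq, LinearMap.mem_ker]
    simpa [sumFun] using hw
  obtain ⟨z, hz⟩ := this
  exact ⟨z, hz⟩

/-- Any vector in the kernel of the transpose is constant. -/
lemma ker_transpose_eq_span_one (L : Matrix (Fin (n+1)) (Fin (n+1)) ℝ)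
    (hcol : ∀ j, ∑ i, L i j = 0)
    (u : Fin (n+1) → ℝ) (hu0 : u ≠ 0) (huk : L *ᵥ u = 0)
    (huniq : ∀ v, L *ᵥ v = 0 → v = (v 0 / u 0) • u) :
    ∀ v : Fin (n+1) → ℝ, Lᵀ *ᵥ v = 0 → ∃ r : ℝ, v = fun _ => r := by
  have hker : Module.finrank ℝ (LinearMap.ker L.mulVecLin) = 1 :=
    finrank_ker_eq_one L u hu0 huk huniq
  have hrk : L.rank = n := by
    have hrn := LinearMap.finrank_range_add_finrank_ker L.mulVecLin
    have hpi : Module.finrank ℝ (Fin (n+1) → ℝ) = n + 1 := by simp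
    unfold Matrix.rank
    omega
  have hrkT : Lᵀ.rank = n := by rw [Matrix.rank_transpose]; exact hrk
  have hkerT : Module.finrank ℝ (LinearMap.ker Lᵀ.mulVecLin) = 1 := by
    have hrn := LinearMap.finrank_range_add_finrank_ker Lᵀ.mulVecLin
    have hpi : Module.finrank ℝ (Fin (n+1) → ℝ) = n + 1 := by simp
    unfold Matrix.rank at hrkT
    omega
  have h1mem : (fun _ => (1:ℝ)) ∈ LinearMap.ker Lᵀ.mulVecLin := by
    rw [LinearMap.mem_ker, Matrix.mulVecLin_apply]
    funext i
    simpa [Matrix.mulVec, dotProduct, Matrix.transpose_apply] using hcol i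
  have h1ne : (fun _ => (1:ℝ)) ≠ (0 : Fin (n+1) → ℝ) := by
    intro h
    have := congrFun h 0
    simp at this
  have hspan : Submodule.span ℝ {(fun _ => (1:ℝ) : Fin (n+1) → ℝ)}
      ≤ LinearMap.ker Lᵀ.mulVecLin := by
    rw [Submodule.span_le, Set.singleton_subset_iff]
    exact h1mem
  have heq : LinearMap.ker Lᵀ.mulVecLin
      = Submodule.span ℝ {(fun _ => (1:ℝ) : Fin (n+1) → ℝ)} := by
    refine (Submodule.eq_of_le_of_finrank_le hspan ?_).symm
    rw [hkerT, finrank_span_singleton h1ne]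
  intro v hv
  have : v ∈ LinearMap.ker Lᵀ.mulVecLin := by
    rw [LinearMap.mem_ker, Matrix.mulVecLin_apply]; exact hv
  rw [heq, Submodule.mem_span_singleton] at this
  obtain ⟨r, hr⟩ := this
  exact ⟨r, by rw [← hr]; funext i; simp⟩

/-- Diagonal cofactors agree with diagonal adjugate entries. -/
lemma cofactor_diag_eq_adjugate (L : Matrix (Fin (n+1)) (Fin (n+1)) ℝ) (i : Fin (n+1)) :
    cofactor L i i = L.adjugate i i := by
  rw [Matrix.adjugate_apply, Matrix.det_succ_row _ i]
  rw [Finset.sum_eq_single i]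
  · have h1 : (L.updateRow i (Pi.single i 1)) i i = 1 := by simp
    have h2 : (L.updateRow i (Pi.single i 1)).submatrix i.succAbove i.succAbove
        = L.submatrix i.succAbove i.succAbove := by
      ext k l
      simp [Matrix.submatrix_apply, Matrix.updateRow_ne (Fin.succAbove_ne i k)]
    rw [h1, h2, cofactor]
    ring
  · intro j _ hji
    have : (L.updateRow i (Pi.single i 1)) i j = 0 := by
      simp [Pi.single_apply, hji.symm]
    rw [this]; ring
  · intro h
    exact absurd (Finset.mem_univ i) h

lemma adjugate_col_ker (L : Matrix (Fin (n+1)) (Fin (n+1)) ℝ)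
    (hdet : L.det = 0) (j : Fin (n+1)) :
    L *ᵥ (fun i => L.adjugate i j) = 0 := by
  funext i
  have h := congrFun (congrFun (Matrix.mul_adjugate L) i) j
  rw [hdet] at h
  simp only [Matrix.mul_apply] at h
  simpa [Matrix.mulVec, dotProduct] using h.trans (by simp)

lemma adjugate_row_ker (L : Matrix (Fin (n+1)) (Fin (n+1)) ℝ)
    (hdet : L.det = 0) (i : Fin (n+1)) :
    Lᵀ *ᵥ (fun j => L.adjugate i j) = 0 := by
  funext k
  have h := congrFun (congrFun (Matrix.adjugate_mul L) i) k
  rw [hdet] at h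
  simp only [Matrix.mul_apply] at h
  simp only [Matrix.mulVec, dotProduct, Matrix.transpose_apply]
  rw [show ∑ x, L x k * L.adjugate i x = ∑ j, L.adjugate i j * L j k by
    apply Finset.sum_congr rfl; intro j _; ring]
  exact h.trans (by simp)

lemma adjugate_diag_ne_zero (L : Matrix (Fin (n+1)) (Fin (n+1)) ℝ)
    (hcol : ∀ j, ∑ i, L i j = 0)
    (u : Fin (n+1) → ℝ) (hupos : ∀ i, 0 < u i) (huk : L *ᵥ u = 0)
    (huniq : ∀ v, L *ᵥ v = 0 → v = (v 0 / u 0) • u) :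
    L.adjugate 0 0 ≠ 0 := by
  rw [Matrix.adjugate_apply]
  intro hdet
  obtain ⟨v, hvne, hv⟩ := (Matrix.exists_mulVec_eq_zero_iff).mpr hdet
  have hv0 : v 0 = 0 := by
    have := congrFun hv 0
    simpa [Matrix.mulVec, dotProduct, Pi.single_apply] using this
  have hrows : ∀ i : Fin (n+1), i ≠ 0 → (L *ᵥ v) i = 0 := by
    intro i hi
    have := congrFun hv i
    simpa [Matrix.mulVec, dotProduct, Matrix.updateRow_ne hi] using this
  have hsum : ∑ i, (L *ᵥ v) i = 0 := by
    simp only [Matrix.mulVec, dotProduct]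
    rw [Finset.sum_comm]
    simp only [← Finset.sum_mul, hcol, zero_mul, Finset.sum_const_zero]
  have h0 : (L *ᵥ v) 0 = 0 := by
    have := Finset.add_sum_erase Finset.univ (fun i => (L *ᵥ v) i) (Finset.mem_univ 0)
    rw [Finset.sum_eq_zero (fun i hi => hrows i (Finset.ne_of_mem_erase hi))] at this
    rw [← this] at hsum
    linarith
  have hker : L *ᵥ v = 0 := by
    funext i
    by_cases hi : i = 0
    · subst hi; exact h0
    · simpa using hrows i hi
  have := huniq v hker
  rw [hv0] at this
  simp at this
  exact hvne this

/-- Structure of the adjugate of `L`: all diagonal entries are a common nonzero multiple of the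
positive kernel vector. -/
lemma adjugate_structure (L : Matrix (Fin (n+1)) (Fin (n+1)) ℝ)
    (hcol : ∀ j, ∑ i, L i j = 0)
    (u : Fin (n+1) → ℝ) (hupos : ∀ i, 0 < u i) (huk : L *ᵥ u = 0)
    (huniq : ∀ v, L *ᵥ v = 0 → v = (v 0 / u 0) • u)
    (hrowconst : ∀ v : Fin (n+1) → ℝ, Lᵀ *ᵥ v = 0 → ∃ r : ℝ, v = fun _ => r) :
    ∃ t : ℝ, t ≠ 0 ∧ ∀ i, L.adjugate i i = t * u i := by
  have hdet : L.det = 0 := by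
    rw [← Matrix.exists_mulVec_eq_zero_iff]
    exact ⟨u, fun h => (hupos 0).ne' (congrFun h 0), huk⟩
  have hcols : ∀ i j, L.adjugate i j = (L.adjugate 0 j / u 0) * u i := by
    intro i j
    have := huniq (fun i => L.adjugate i j) (adjugate_col_ker L hdet j)
    have := congrFun this i
    simpa using this
  obtain ⟨r, hr⟩ := hrowconst (fun j => L.adjugate 0 j) (adjugate_row_ker L hdet 0)
  have hrowV : ∀ j, L.adjugate 0 j = r := fun j => congrFun hr j
  refine ⟨r / u 0, ?_, ?_⟩
  · have h00 : L.adjugate 0 0 ≠ 0 := adjugate_diag_ne_zero L hcol u hupos huk huniq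
    rw [hrowV 0] at h00
    exact div_ne_zero h00 (ne_of_gt (hupos 0))
  · intro i
    rw [hcols i i, hrowV i]

/-- Evaluation of the characteristic polynomial. -/
lemma eval_charpoly_eq {R : Type*} [CommRing R] [Nontrivial R]
    (M : Matrix (Fin (n+1)) (Fin (n+1)) R) (x : R) :
    M.charpoly.eval x = (x • (1 : Matrix (Fin (n+1)) (Fin (n+1)) R) - M).det := by
  rw [Matrix.charpoly, ← Polynomial.coe_evalRingHom, RingHom.map_det]
  congr 1
  ext i j
  by_cases h : i = j <;>
    simp [h, Matrix.charmatrix_apply, Matrix.map_apply, Matrix.one_apply, Matrix.smul_apply]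

lemma root_iff_eigenvector (M : Matrix (Fin (n+1)) (Fin (n+1)) ℂ) (μ : ℂ) :
    M.charpoly.IsRoot μ ↔ ∃ x : Fin (n+1) → ℂ, x ≠ 0 ∧ M *ᵥ x = μ • x := by
  rw [Polynomial.IsRoot, eval_charpoly_eq, ← Matrix.exists_mulVec_eq_zero_iff]
  constructor
  · rintro ⟨x, hne, hx⟩
    refine ⟨x, hne, ?_⟩
    have := hx
    rw [Matrix.sub_mulVec, Matrix.smul_mulVec, Matrix.one_mulVec] at this
    have h2 : μ • x - M *ᵥ x = 0 := this
    funext i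
    have := congrFun h2 i
    simp only [Pi.sub_apply, Pi.zero_apply, sub_eq_zero] at this
    exact this.symm
  · rintro ⟨x, hne, hx⟩
    refine ⟨x, hne, ?_⟩
    rw [Matrix.sub_mulVec, Matrix.smul_mulVec, Matrix.one_mulVec, hx]
    simp

/-- Collatz–Wielandt upper bound for essentially nonnegative matrices. -/
lemma cw_upper (M : Matrix (Fin (n+1)) (Fin (n+1)) ℝ)
    (hess : ∀ i j, i ≠ j → 0 ≤ M i j)
    (v : Fin (n+1) → ℝ) (hv : ∀ i, 0 < v i) (c : ℝ)
    (hMv : ∀ i, (M *ᵥ v) i ≤ c * v i)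
    (μ : ℂ) (hμ : ((M.map Complex.ofReal).charpoly).IsRoot μ) : μ.re ≤ c := by
  classical
  obtain ⟨x, hxne, hx⟩ := (root_iff_eigenvector _ μ).mp hμ
  obtain ⟨i, -, hmax⟩ := Finset.exists_max_image Finset.univ
    (fun j => ‖x j‖ / v j) ⟨0, Finset.mem_univ 0⟩
  have hmax' : ∀ j, ‖x j‖ / v j ≤ ‖x i‖ / v i :=
    fun j => hmax j (Finset.mem_univ j)
  have hxi : x i ≠ 0 := by
    intro h
    apply hxne
    funext j
    have := hmax' j
    rw [h] at this
    simp only [norm_zero, zero_div] at this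
    have h2 : ‖x j‖ ≤ 0 := by
      have := mul_le_mul_of_nonneg_right this (le_of_lt (hv j))
      rw [div_mul_cancel₀ _ (ne_of_gt (hv j)), zero_mul] at this
      exact this
    simpa using le_antisymm h2 (norm_nonneg _)
  have hxiabs : 0 < ‖x i‖ := by
    simpa [norm_pos_iff] using hxi
  have hbound : ∀ j, ‖x j‖ ≤ (‖x i‖ / v i) * v j := by
    intro j
    have := hmax' j
    calc ‖x j‖ = (‖x j‖ / v j) * v j := by
          rw [div_mul_cancel₀ _ (ne_of_gt (hv j))]
      _ ≤ (‖x i‖ / v i) * v j :=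
          mul_le_mul_of_nonneg_right this (le_of_lt (hv j))
  have heig : (μ - (M i i : ℂ)) * x i = ∑ j ∈ Finset.univ.erase i, (M i j : ℂ) * x j := by
    have := congrFun hx i
    simp only [Matrix.mulVec, dotProduct, Pi.smul_apply, smul_eq_mul,
      Matrix.map_apply] at this
    rw [← Finset.add_sum_erase Finset.univ _ (Finset.mem_univ i)] at this
    have h2 : ∑ j ∈ Finset.univ.erase i, (M i j : ℂ) * x j = μ * x i - (M i i : ℂ) * x i := by
      rw [← this]; ring
    rw [h2]; ring
  have habs : ‖μ - (M i i : ℂ)‖ * ‖x i‖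
      ≤ (‖x i‖ / v i) * ∑ j ∈ Finset.univ.erase i, M i j * v j := by
    rw [← norm_mul, heig]
    refine (norm_sum_le _ _).trans ?_
    rw [Finset.mul_sum]
    refine Finset.sum_le_sum fun j hj => ?_
    have hij : i ≠ j := fun h => (Finset.mem_erase.mp hj).1 h.symm
    rw [norm_mul, Complex.norm_real, Real.norm_eq_abs, abs_of_nonneg (hess i j hij)]
    calc M i j * ‖x j‖ ≤ M i j * ((‖x i‖ / v i) * v j) :=
          mul_le_mul_of_nonneg_left (hbound j) (hess i j hij)
      _ = ‖x i‖ / v i * (M i j * v j) := by ring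
  have hsum : ∑ j ∈ Finset.univ.erase i, M i j * v j ≤ c * v i - M i i * v i := by
    have h1 : (M *ᵥ v) i = M i i * v i + ∑ j ∈ Finset.univ.erase i, M i j * v j := by
      simp only [Matrix.mulVec, dotProduct]
      rw [← Finset.add_sum_erase Finset.univ _ (Finset.mem_univ i)]
    have := hMv i
    rw [h1] at this
    linarith
  have hfinal : ‖μ - (M i i : ℂ)‖ ≤ c - M i i := by
    have hvipos := hv i
    have h2 : (‖x i‖ / v i) * (c * v i - M i i * v i)
        = ‖x i‖ * (c - M i i) := by field_simp
    have h3 : ‖μ - (M i i : ℂ)‖ * ‖x i‖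
        ≤ ‖x i‖ * (c - M i i) := by
      rw [← h2]
      refine habs.trans ?_
      exact mul_le_mul_of_nonneg_left hsum (by positivity)
    nlinarith [hxiabs]
  have hre : μ.re - M i i ≤ ‖μ - (M i i : ℂ)‖ := by
    have := Complex.re_le_norm (μ - (M i i : ℂ))
    simpa using this
  linarith

lemma charpoly_ne_zero (M : Matrix (Fin (n+1)) (Fin (n+1)) ℝ) :
    (M.map Complex.ofReal).charpoly ≠ 0 :=
  (Matrix.charpoly_monic _).ne_zero

lemma sb_set_nonempty (M : Matrix (Fin (n+1)) (Fin (n+1)) ℝ) :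
    {x : ℝ | ∃ μ : ℂ, ((M.map Complex.ofReal).charpoly).IsRoot μ ∧ μ.re = x}.Nonempty := by
  have hdeg : ((M.map Complex.ofReal).charpoly).degree ≠ 0 := by
    rw [Polynomial.degree_eq_natDegree (charpoly_ne_zero M)]
    rw [Matrix.charpoly_natDegree_eq_dim]
    simp
    exact Nat.cast_add_one_ne_zero n
  obtain ⟨μ, hμ⟩ := IsAlgClosed.exists_root _ hdeg
  exact ⟨μ.re, μ, hμ, rfl⟩

lemma sb_set_bddAbove (M : Matrix (Fin (n+1)) (Fin (n+1)) ℝ) :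
    BddAbove {x : ℝ | ∃ μ : ℂ, ((M.map Complex.ofReal).charpoly).IsRoot μ ∧ μ.re = x} := by
  have hfin : {μ : ℂ | ((M.map Complex.ofReal).charpoly).IsRoot μ}.Finite :=
    Polynomial.finite_setOf_isRoot (charpoly_ne_zero M)
  have : {x : ℝ | ∃ μ : ℂ, ((M.map Complex.ofReal).charpoly).IsRoot μ ∧ μ.re = x}
      = Complex.re '' {μ : ℂ | ((M.map Complex.ofReal).charpoly).IsRoot μ} := by
    ext x
    simp [Set.mem_image]
  rw [this]
  exact (hfin.image _).bddAbove

lemma spectralBound_le (M : Matrix (Fin (n+1)) (Fin (n+1)) ℝ) {c : ℝ}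
    (h : ∀ μ : ℂ, ((M.map Complex.ofReal).charpoly).IsRoot μ → μ.re ≤ c) :
    spectralBound M ≤ c := by
  apply csSup_le (sb_set_nonempty M)
  rintro x ⟨μ, hμ, rfl⟩
  exact h μ hμ

lemma le_spectralBound (M : Matrix (Fin (n+1)) (Fin (n+1)) ℝ) {μ : ℂ}
    (hμ : ((M.map Complex.ofReal).charpoly).IsRoot μ) :
    μ.re ≤ spectralBound M :=
  le_csSup (sb_set_bddAbove M) ⟨μ, hμ, rfl⟩

lemma real_root_to_complex (M : Matrix (Fin (n+1)) (Fin (n+1)) ℝ) {x : ℝ}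
    (hx : (M.charpoly).IsRoot x) :
    ((M.map Complex.ofReal).charpoly).IsRoot ((x : ℂ)) := by
  have h1 : (M.map Complex.ofReal) = M.map (Complex.ofRealHom : ℝ →+* ℂ) := rfl
  rw [h1, Matrix.charpoly_map]
  rw [Polynomial.IsRoot, Polynomial.eval_map]
  have h2 : ((x : ℂ)) = Complex.ofRealHom x := rfl
  rw [h2, Polynomial.eval₂_hom]
  rw [Polynomial.IsRoot] at hx
  rw [hx]
  simp

/-- Multilinear expansion of `det (B + ε • A)` by rows. -/
lemma det_add_smul_expand (A B : Matrix (Fin (n+1)) (Fin (n+1)) ℝ) (ε : ℝ) :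
    (B + ε • A).det = ∑ k ∈ Finset.range (n+2), ε^k *
      ∑ s ∈ Finset.powersetCard k (Finset.univ : Finset (Fin (n+1))),
        Matrix.det (s.piecewise A B) := by
  classical
  have key : Matrix.det (B + ε • A)
      = ∑ s : Finset (Fin (n+1)), ε ^ s.card * Matrix.det (s.piecewise A B) := by
    have h1 : Matrix.det (B + ε • A)
        = (Matrix.detRowAlternating (R := ℝ) (n := Fin (n+1))).toMultilinearMap
            ((ε • A : Matrix _ _ ℝ) + B) := by
      rw [add_comm (ε • A : Matrix _ _ ℝ) B]
      rfl
    rw [h1]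
    refine (MultilinearMap.map_add_univ _ (ε • A : Matrix _ _ ℝ) B).trans ?_
    refine Finset.sum_congr rfl fun s _ => ?_
    have hpw : (s.piecewise (ε • A : Matrix _ _ ℝ) B : Fin (n+1) → Fin (n+1) → ℝ)
        = s.piecewise (fun i => ε • (s.piecewise A B : Fin (n+1) → Fin (n+1) → ℝ) i)
            (s.piecewise A B) := by
      funext i
      by_cases hi : i ∈ s
      · simp [Finset.piecewise, hi]
        rfl
      · simp [Finset.piecewise, hi]
    rw [show ((s.piecewise (ε • A : Matrix _ _ ℝ) B : Fin (n+1) → Fin (n+1) → ℝ)) =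
      s.piecewise (fun i => ε • (s.piecewise A B : Fin (n+1) → Fin (n+1) → ℝ) i)
        (s.piecewise A B) from hpw]
    have := (Matrix.detRowAlternating (R := ℝ)
      (n := Fin (n+1))).toMultilinearMap.map_piecewise_smul
      (fun _ => ε) (s.piecewise A B) s
    rw [this]
    simp [Matrix.det]
  rw [key]
  calc (∑ s : Finset (Fin (n+1)), ε ^ s.card * Matrix.det (s.piecewise A B))
      = ∑ s ∈ (Finset.univ : Finset (Fin (n+1))).powerset, ε ^ s.card *
          Matrix.det (s.piecewise A B) := by rw [Finset.powerset_univ]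
    _ = _ := by
        rw [Finset.sum_powerset]
        simp only [Finset.card_univ, Fintype.card_fin]
        refine Finset.sum_congr rfl fun k _ => ?_
        rw [Finset.mul_sum]
        refine Finset.sum_congr rfl fun s hs => ?_
        rw [(Finset.mem_powersetCard.mp hs).2]

/-- Asymptotics of `det (A + d • B) / d^n` as `d → ∞` when `det B = 0`. -/
lemma tendsto_det_div_pow (A B : Matrix (Fin (n+1)) (Fin (n+1)) ℝ) (hB : B.det = 0) :
    Tendsto (fun d : ℝ => Matrix.det (A + d • B) / d^n) atTop
      (𝓝 (∑ i, Matrix.det (B.updateRow i (A i)))) := by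
  classical
  obtain ⟨c, hc⟩ : ∃ c : ℕ → ℝ, ∀ k,
      (∑ s ∈ Finset.powersetCard k (Finset.univ : Finset (Fin (n+1))),
        Matrix.det (s.piecewise A B)) = c k := ⟨_, fun _ => rfl⟩
  have hc0 : c 0 = 0 := by
    rw [← hc 0]
    simp only [Finset.powersetCard_zero, Finset.sum_singleton, Finset.piecewise_empty]
    exact hB
  have hc1 : c 1 = ∑ i, Matrix.det (B.updateRow i (A i)) := by
    rw [← hc 1]
    simp only [Finset.powersetCard_one, Finset.sum_map, Function.Embedding.coeFn_mk]
    refine Finset.sum_congr rfl fun i _ => ?_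
    congr 1
    funext j
    by_cases hj : j = i
    · subst hj; simp [Finset.piecewise, Matrix.updateRow_self]
    · simp [Finset.piecewise, hj, Matrix.updateRow_ne hj]
  have hev : ∀ᶠ d in (atTop : Filter ℝ), Matrix.det (A + d • B) / d^n
      = c 1 + ∑ j ∈ Finset.range n, (d⁻¹)^(j+1) * c (j+2) := by
    filter_upwards [eventually_gt_atTop (0:ℝ)] with d hd
    have hd' : d ≠ 0 := ne_of_gt hd
    have hAB : A + d • B = d • (B + d⁻¹ • A) := by
      rw [smul_add, smul_smul, mul_inv_cancel₀ hd', one_smul]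
      exact add_comm _ _
    rw [hAB, Matrix.det_smul]
    simp only [Fintype.card_fin]
    rw [det_add_smul_expand A B d⁻¹]
    simp only [hc]
    rw [Finset.sum_range_succ' _ (n+1), Finset.sum_range_succ' _ n]
    simp only [pow_zero, one_mul, hc0, mul_zero, add_zero, pow_one]
    have hdiv : ∀ S : ℝ, d^(n+1) * S / d^n = d * S := by
      intro S
      rw [pow_succ]
      field_simp
    rw [hdiv, mul_add, Finset.mul_sum]
    have hterm : ∀ k, d * ((d⁻¹)^(k+1+1) * c (k+1+1)) = (d⁻¹)^(k+1) * c (k+2) := by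
      intro k
      rw [pow_succ d⁻¹ (k+1)]
      calc d * ((d⁻¹)^(k+1) * d⁻¹ * c (k+1+1))
          = (d * d⁻¹) * ((d⁻¹)^(k+1) * c (k+2)) := by ring
        _ = (d⁻¹)^(k+1) * c (k+2) := by rw [mul_inv_cancel₀ hd', one_mul]
    have hone : d * ((d⁻¹)^(0+1) * c (0+1)) = c 1 := by
      calc d * ((d⁻¹)^(0+1) * c (0+1)) = (d * d⁻¹) * c 1 := by ring
        _ = c 1 := by rw [mul_inv_cancel₀ hd', one_mul]
    rw [hone, Finset.sum_congr rfl (fun k _ => hterm k)]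
    exact add_comm _ _
  have hlim : Tendsto (fun d : ℝ => c 1 + ∑ j ∈ Finset.range n, (d⁻¹)^(j+1) * c (j+2))
      atTop (𝓝 (c 1 + ∑ j ∈ Finset.range n, (0:ℝ) * c (j+2))) := by
    refine Tendsto.add tendsto_const_nhds ?_
    refine tendsto_finset_sum _ fun j _ => ?_
    have h1 : Tendsto (fun d : ℝ => (d⁻¹)^(j+1)) atTop (𝓝 ((0:ℝ)^(j+1))) :=
      tendsto_inv_atTop_zero.pow (j+1)
    rw [zero_pow (Nat.succ_ne_zero j)] at h1
    exact h1.mul_const (c (j+2))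
  have hev' : (fun d : ℝ => c 1 + ∑ j ∈ Finset.range n, (d⁻¹)^(j+1) * c (j+2))
      =ᶠ[atTop] (fun d : ℝ => Matrix.det (A + d • B) / d^n) := by
    filter_upwards [hev] with d h
    exact h.symm
  have := Tendsto.congr' hev' hlim
  simpa [hc1] using this

/-- Intermediate value theorem for the characteristic polynomial. -/
lemma exists_root_between (M : Matrix (Fin (n+1)) (Fin (n+1)) ℝ) {a b : ℝ} (hab : a ≤ b)
    (hsign : M.charpoly.eval a * M.charpoly.eval b < 0) :
    ∃ x ∈ Set.Icc a b, M.charpoly.IsRoot x := by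
  have hcont : ContinuousOn (fun x => M.charpoly.eval x) (Set.Icc a b) :=
    (Polynomial.continuous M.charpoly).continuousOn
  rcases mul_neg_iff.mp hsign with ⟨ha, hb⟩ | ⟨ha, hb⟩
  · have h0 : (0:ℝ) ∈ Set.Icc (M.charpoly.eval b) (M.charpoly.eval a) :=
      ⟨le_of_lt hb, le_of_lt ha⟩
    obtain ⟨x, hx, hfx⟩ := intermediate_value_Icc' hab hcont h0
    exact ⟨x, hx, hfx⟩
  · have h0 : (0:ℝ) ∈ Set.Icc (M.charpoly.eval a) (M.charpoly.eval b) :=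
      ⟨le_of_lt ha, le_of_lt hb⟩
    obtain ⟨x, hx, hfx⟩ := intermediate_value_Icc hab hcont h0
    exact ⟨x, hx, hfx⟩

end SpectralBoundAux

open SpectralBoundAux in
/-- For an essentially nonnegative, irreducible `L` with zero column sums,
`s(F − D + d·L) → (Σ (β_i − γ_i)·C_{ii}) / (Σ C_{ii})` as `d → ∞`. -/
theorem spectralBound_tendsto_atTop {n : ℕ} (hn : 1 ≤ n)
    (L : Matrix (Fin (n+1)) (Fin (n+1)) ℝ)
    (hess : ∀ i j, i ≠ j → 0 ≤ L i j)
    (hirr : IsIrreducibleMatrix L)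
    (hcol : ∀ j, ∑ i, L i j = 0)
    (β γ : Fin (n+1) → ℝ) (hβ : ∀ i, 0 < β i) (hγ : ∀ i, 0 < γ i) :
    Filter.Tendsto
      (fun d : ℝ => spectralBound (Matrix.diagonal β - Matrix.diagonal γ + d • L))
      Filter.atTop
      (nhds ((∑ i, (β i - γ i) * cofactor L i i) / (∑ i, cofactor L i i))) := by
  classical
  obtain ⟨u, hupos, huk, huniq⟩ := exists_pos_ker L hess hirr hcol
  have hune : u ≠ 0 := fun h => (hupos 0).ne' (congrFun h 0)
  have hrowconst := ker_transpose_eq_span_one L hcol u hune huk huniq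
  obtain ⟨t, htne, hadj⟩ := adjugate_structure L hcol u hupos huk huniq hrowconst
  have hSu : 0 < ∑ i, u i := Finset.sum_pos (fun i _ => hupos i) ⟨0, Finset.mem_univ 0⟩
  set c : ℝ := (∑ i, (β i - γ i) * u i) / (∑ i, u i) with hc
  have hcmul : c * (∑ i, u i) = ∑ i, (β i - γ i) * u i := by
    rw [hc, div_mul_cancel₀ _ (ne_of_gt hSu)]
  have hcof : ∀ i, cofactor L i i = t * u i := fun i =>
    (cofactor_diag_eq_adjugate L i).trans (hadj i)
  have htarget : (∑ i, (β i - γ i) * cofactor L i i) / (∑ i, cofactor L i i) = c := by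
    simp only [hcof]
    have h1 : ∑ i, (β i - γ i) * (t * u i) = t * ∑ i, (β i - γ i) * u i := by
      rw [Finset.mul_sum]; exact Finset.sum_congr rfl fun i _ => by ring
    have h2 : ∑ i, t * u i = t * ∑ i, u i := by rw [Finset.mul_sum]
    rw [h1, h2, mul_div_mul_left _ _ htne]
  rw [htarget]
  have hdetL : L.det = 0 := det_eq_zero L hcol
  have hdetnegL : (-L).det = 0 := by rw [Matrix.det_neg, hdetL, mul_zero]
  obtain ⟨z, hz⟩ := range_eq_sum_zero L hcol u hune huk huniq
      (fun i => c * u i - (β i - γ i) * u i) (by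
        rw [Finset.sum_sub_distrib, ← Finset.mul_sum, hcmul, sub_self])
  set r : Fin (n+1) → ℝ := fun i => (β i - γ i) * z i - c * z i with hrdef
  -- the basic mulVec identity
  have hMv : ∀ d : ℝ, d ≠ 0 → ∀ i,
      ((Matrix.diagonal β - Matrix.diagonal γ + d • L) *ᵥ (fun j => u j + d⁻¹ * z j)) i
        = c * (u i + d⁻¹ * z i) + d⁻¹ * r i := by
    intro d hd i
    have hveq : (fun j => u j + d⁻¹ * z j) = u + d⁻¹ • z := by funext j; simp
    have hLv : L *ᵥ (fun j => u j + d⁻¹ * z j)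
        = (0 : Fin (n+1) → ℝ) + d⁻¹ • (fun i => c * u i - (β i - γ i) * u i) := by
      rw [hveq, Matrix.mulVec_add, Matrix.mulVec_smul, huk, hz]
    have hexp : ∀ (v : Fin (n+1) → ℝ) (k : Fin (n+1)),
        ((Matrix.diagonal β - Matrix.diagonal γ + d • L) *ᵥ v) k
          = β k * v k - γ k * v k + d * (L *ᵥ v) k := by
      intro v k
      simp only [Matrix.mulVec, dotProduct, Matrix.sub_apply, Matrix.add_apply,
        Matrix.smul_apply, smul_eq_mul, sub_mul, add_mul, Finset.sum_add_distrib,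
        Finset.sum_sub_distrib, Matrix.diagonal_apply, ite_mul, zero_mul, mul_assoc]
      rw [Finset.sum_ite_eq Finset.univ k (fun j => β k * v j),
        Finset.sum_ite_eq Finset.univ k (fun j => γ k * v j), ← Finset.mul_sum]
      simp
    rw [hexp, hLv]
    simp only [Pi.add_apply, Pi.smul_apply, Pi.zero_apply, smul_eq_mul, hrdef, zero_add]
    field_simp
    ring
  -- the charpoly evaluation
  have hcharval : ∀ d x : ℝ,
      ((Matrix.diagonal β - Matrix.diagonal γ + d • L)).charpoly.eval x
        = Matrix.det (Matrix.diagonal (fun i => x - β i + γ i) + d • (-L)) := by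
    intro d x
    rw [eval_charpoly_eq]
    congr 1
    ext i j
    by_cases h : i = j
    · subst h
      simp only [Matrix.sub_apply, Matrix.add_apply, Matrix.smul_apply, Matrix.one_apply_eq,
        Matrix.diagonal_apply_eq, Matrix.neg_apply, smul_eq_mul]
      ring
    · simp only [Matrix.sub_apply, Matrix.add_apply, Matrix.smul_apply,
        Matrix.one_apply_ne h, Matrix.diagonal_apply_ne _ h, Matrix.neg_apply, smul_eq_mul]
      ring
  -- computation of the limit coefficient
  have hKval : ∀ x : ℝ,
      (∑ i, Matrix.det ((-L).updateRow i ((Matrix.diagonal (fun k => x - β k + γ k)) i)))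
        = (-1:ℝ)^n * t * ((∑ i, u i) * x - ∑ i, (β i - γ i) * u i) := by
    intro x
    have hrow : ∀ i : Fin (n+1), (Matrix.diagonal (fun k => x - β k + γ k)) i
        = (x - β i + γ i) • (Pi.single i 1 : Fin (n+1) → ℝ) := by
      intro i; funext j
      by_cases h : i = j
      · subst h; simp
      · simp [Matrix.diagonal_apply_ne _ h, Pi.single_apply, Ne.symm h, h]
    have hterm : ∀ i : Fin (n+1),
        Matrix.det ((-L).updateRow i ((Matrix.diagonal (fun k => x - β k + γ k)) i))
          = (x - β i + γ i) * ((-1:ℝ)^n * (t * u i)) := by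
      intro i
      rw [hrow i, Matrix.det_updateRow_smul, ← Matrix.adjugate_apply]
      congr 1
      have hnegsmul : (-L) = (-1:ℝ) • L := by rw [neg_one_smul]
      rw [hnegsmul, Matrix.adjugate_smul]
      simp only [Fintype.card_fin, Nat.add_sub_cancel, Matrix.smul_apply, smul_eq_mul]
      rw [hadj i]
    rw [Finset.sum_congr rfl fun i _ => hterm i]
    have hexp : ∀ i : Fin (n+1), (x - β i + γ i) * ((-1:ℝ)^n * (t * u i))
        = ((-1:ℝ)^n * t) * (x * u i) - ((-1:ℝ)^n * t) * ((β i - γ i) * u i) := by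
      intro i; ring
    rw [Finset.sum_congr rfl fun i _ => hexp i, Finset.sum_sub_distrib,
      ← Finset.mul_sum, ← Finset.mul_sum, ← Finset.mul_sum]
    ring
  -- the main tendsto of determinants
  have htends : ∀ x : ℝ, Tendsto (fun d : ℝ =>
      ((Matrix.diagonal β - Matrix.diagonal γ + d • L)).charpoly.eval x / d^n) atTop
      (𝓝 ((-1:ℝ)^n * t * ((∑ i, u i) * x - ∑ i, (β i - γ i) * u i))) := by
    intro x
    have h := tendsto_det_div_pow (Matrix.diagonal (fun i => x - β i + γ i)) (-L) hdetnegL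
    rw [hKval x] at h
    refine h.congr fun d => ?_
    rw [hcharval d x]
  -- final filter argument
  rw [Metric.tendsto_nhds]
  intro ε hε
  have hε2 : 0 < ε/2 := by linarith
  set κ : ℝ := (-1:ℝ)^n * t * ((∑ i, u i) * (ε/2)) with hκ
  have hκne : κ ≠ 0 := by
    rw [hκ]
    refine mul_ne_zero (mul_ne_zero (pow_ne_zero n (by norm_num : (-1:ℝ) ≠ 0)) htne) ?_
    exact ne_of_gt (by positivity)
  have hlow : ((-1:ℝ)^n * t * ((∑ i, u i) * (c - ε/2) - ∑ i, (β i - γ i) * u i)) = -κ := by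
    rw [hκ, ← hcmul]; ring
  have hhigh : ((-1:ℝ)^n * t * ((∑ i, u i) * (c + ε/2) - ∑ i, (β i - γ i) * u i)) = κ := by
    rw [hκ, ← hcmul]; ring
  have hprodlim : Tendsto (fun d : ℝ =>
      (((Matrix.diagonal β - Matrix.diagonal γ + d • L)).charpoly.eval (c - ε/2) / d^n)
      * (((Matrix.diagonal β - Matrix.diagonal γ + d • L)).charpoly.eval (c + ε/2) / d^n))
      atTop (𝓝 (-κ * κ)) := by
    have h1 := htends (c - ε/2)
    have h2 := htends (c + ε/2)
    rw [hlow] at h1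
    rw [hhigh] at h2
    exact h1.mul h2
  have hprodneg : -κ * κ < 0 := by
    have := mul_self_pos.mpr hκne
    nlinarith
  have hevsign := hprodlim.eventually_lt_const hprodneg
  -- positivity events
  have hE2 : ∀ᶠ d in (atTop : Filter ℝ), ∀ i, 0 < u i + d⁻¹ * z i := by
    rw [eventually_all]
    intro i
    have h1 : Tendsto (fun d : ℝ => u i + d⁻¹ * z i) atTop (𝓝 (u i + 0 * z i)) :=
      tendsto_const_nhds.add ((tendsto_inv_atTop_zero).mul_const (z i))
    rw [zero_mul, add_zero] at h1
    exact h1.eventually_const_lt (hupos i)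
  have hE3 : ∀ᶠ d in (atTop : Filter ℝ), ∀ i, d⁻¹ * r i < ε/2 * (u i + d⁻¹ * z i) := by
    rw [eventually_all]
    intro i
    have h1 : Tendsto (fun d : ℝ => d⁻¹ * r i) atTop (𝓝 (0 * r i)) :=
      (tendsto_inv_atTop_zero).mul_const (r i)
    rw [zero_mul] at h1
    have h2 : Tendsto (fun d : ℝ => ε/2 * (u i + d⁻¹ * z i)) atTop
        (𝓝 (ε/2 * (u i + 0 * z i))) := by
      refine Tendsto.const_mul _ ?_
      exact tendsto_const_nhds.add ((tendsto_inv_atTop_zero).mul_const (z i))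
    rw [zero_mul, add_zero] at h2
    exact h1.eventually_lt h2 (mul_pos hε2 (hupos i))
  filter_upwards [eventually_gt_atTop (0:ℝ), hE2, hE3, hevsign] with d hd hpos hbnd hsign
  have hd' : d ≠ 0 := ne_of_gt hd
  -- upper bound
  have hub : spectralBound (Matrix.diagonal β - Matrix.diagonal γ + d • L) ≤ c + ε/2 := by
    apply spectralBound_le
    intro μ hμ
    refine cw_upper _ ?_ (fun i => u i + d⁻¹ * z i) hpos (c + ε/2) ?_ μ hμ
    · intro i j hij
      simp only [Matrix.sub_apply, Matrix.add_apply, Matrix.smul_apply,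
        Matrix.diagonal_apply_ne _ hij, smul_eq_mul]
      simpa using mul_nonneg hd.le (hess i j hij)
    · intro i
      rw [hMv d hd' i]
      have h1 := hbnd i
      nlinarith [hpos i]
  -- lower bound
  have hlb : c - ε/2 ≤ spectralBound (Matrix.diagonal β - Matrix.diagonal γ + d • L) := by
    have hsign' :
        ((Matrix.diagonal β - Matrix.diagonal γ + d • L)).charpoly.eval (c - ε/2)
        * ((Matrix.diagonal β - Matrix.diagonal γ + d • L)).charpoly.eval (c + ε/2) < 0 := by
      have h2 : ((Matrix.diagonal β - Matrix.diagonal γ + d • L)).charpoly.eval (c - ε/2)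
          * ((Matrix.diagonal β - Matrix.diagonal γ + d • L)).charpoly.eval (c + ε/2)
          = ((((Matrix.diagonal β - Matrix.diagonal γ + d • L)).charpoly.eval (c - ε/2) / d^n)
            * (((Matrix.diagonal β - Matrix.diagonal γ + d • L)).charpoly.eval (c + ε/2) / d^n))
            * (d^n * d^n) := by
        field_simp
      rw [h2]
      exact mul_neg_of_neg_of_pos hsign (by positivity)
    obtain ⟨x, hx, hroot⟩ := exists_root_between _ (by linarith : c - ε/2 ≤ c + ε/2) hsign'
    have hcroot := real_root_to_complex _ hroot
    have hle := le_spectralBound (Matrix.diagonal β - Matrix.diagonal γ + d • L) hcroot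
    rw [Complex.ofReal_re] at hle
    exact le_trans hx.1 hle
  rw [Real.dist_eq, abs_sub_lt_iff]
  constructor <;> linarith
end
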